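/- arXiv:1503.05865 — 8 statements merged into one kernel-verified Lean document; each statement's English description precedes it below -/
import Mathlib

section
/- Let N be a (possibly infinite) near polygon in which every line is incident with exactly three points. Then any two points of N at distance 2 from each other have exactly 1, 2, 3 or 5 common neighbours. -/
/-- A partial linear space with a distinguished point set: lines are sets of points,
every line has at least two points and lies inside the point set, and two distinct
points lie on at most one common line. -/
structure Geom (P : Type*) where
  pts : Set P
  lines : Set (Set P)
  lines_pts : ∀ L ∈ lines, L ⊆ pts
  two_pts : ∀ L ∈ lines, ∃ x ∈ L, ∃ y ∈ L, x ≠ y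
  unique_line : ∀ L₁ ∈ lines, ∀ L₂ ∈ lines, ∀ x y : P,
    x ≠ y → x ∈ L₁ → y ∈ L₁ → x ∈ L₂ → y ∈ L₂ → L₁ = L₂

variable {P : Type*}

/-- The collinearity graph of a point-line geometry. -/
def Geom.graph (G : Geom P) : SimpleGraph P where
  Adj x y := x ≠ y ∧ ∃ L ∈ G.lines, x ∈ L ∧ y ∈ L
  symm := by
    constructor
    rintro x y ⟨hxy, L, hL, hx, hy⟩
    exact ⟨hxy.symm, L, hL, hy, hx⟩
  loopless := by
    constructor
    rintro x ⟨h, -⟩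
    exact h rfl

/-- The distance between two points, measured in the collinearity graph. -/
noncomputable def Geom.dist (G : Geom P) (x y : P) : ℕ := G.graph.dist x y

/-- The minimum distance from a point to a (nonempty) set of points. -/
noncomputable def Geom.setDist (G : Geom P) (x : P) (X : Set P) : ℕ :=
  sInf (G.dist x '' X)

/-- A near `2d`-gon: the collinearity graph restricted to the points is connected of
diameter `d`, and every point-line pair admits a unique nearest point on the line. -/
def Geom.IsNearPolygon (G : Geom P) (d : ℕ) : Prop :=
  (∀ x ∈ G.pts, ∀ y ∈ G.pts, G.graph.Reachable x y) ∧
  (∀ x ∈ G.pts, ∀ y ∈ G.pts, G.dist x y ≤ d) ∧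
  (∃ x ∈ G.pts, ∃ y ∈ G.pts, G.dist x y = d) ∧
  (∀ x ∈ G.pts, ∀ L ∈ G.lines, ∃! y, y ∈ L ∧ ∀ z ∈ L, G.dist x y ≤ G.dist x z)

/-- A generalized hexagon: a near hexagon in which every point is on at least two
lines and any two points at distance 2 have exactly one common neighbour. -/
def Geom.IsGenHexagon (G : Geom P) : Prop :=
  G.IsNearPolygon 3 ∧
  (∀ x ∈ G.pts, ∃ L₁ ∈ G.lines, ∃ L₂ ∈ G.lines, L₁ ≠ L₂ ∧ x ∈ L₁ ∧ x ∈ L₂) ∧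
  (∀ x ∈ G.pts, ∀ y ∈ G.pts, G.dist x y = 2 →
    ∃! z, G.graph.Adj x z ∧ G.graph.Adj z y)

/-- A geometry has order `(s,t)` if every line has exactly `s+1` points and every
point is on exactly `t+1` lines. -/
def Geom.HasOrder (G : Geom P) (s t : ℕ) : Prop :=
  (∀ L ∈ G.lines, L.ncard = s + 1) ∧
  (∀ x ∈ G.pts, {L | L ∈ G.lines ∧ x ∈ L}.ncard = t + 1)

/-- `H` is a (full) subgeometry of `G`: its points are points of `G` and its lines
are lines of `G` (lines being sets of points, fullness is automatic). -/
def Geom.IsSubgeom (H G : Geom P) : Prop := H.pts ⊆ G.pts ∧ H.lines ⊆ G.lines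

/-- `H` is isometrically embedded in `G`: distances between points of `H` agree. -/
def Geom.IsIsometric (H G : Geom P) : Prop :=
  ∀ x ∈ H.pts, ∀ y ∈ H.pts, H.dist x y = G.dist x y

/-- An ovoid: a set of points meeting every line in exactly one point. -/
def Geom.IsOvoid (G : Geom P) (O : Set P) : Prop :=
  O ⊆ G.pts ∧ ∀ L ∈ G.lines, ∃! x, x ∈ L ∩ O

/-- A valuation of a geometry: a nonnegative integer-valued function attaining the
value 0, such that every line has a unique point of minimal value and all other
points of the line have that value plus one. -/
def Geom.IsValuation (G : Geom P) (f : P → ℤ) : Prop :=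
  (∀ x ∈ G.pts, 0 ≤ f x) ∧ (∃ x ∈ G.pts, f x = 0) ∧
  (∀ L ∈ G.lines, ∃ x ∈ L, ∀ y ∈ L, y ≠ x → f y = f x + 1)

namespace NPaux

open SimpleGraph

variable {P : Type*} {N : Geom P} {L : Set P} {p u v w : P}

lemma adj_of_line (hL : L ∈ N.lines) (ha : u ∈ L) (hb : v ∈ L) (hab : u ≠ v) :
    N.graph.Adj u v := ⟨hab, L, hL, ha, hb⟩

lemma dist_line (hL : L ∈ N.lines) (ha : u ∈ L) (hb : v ∈ L) (hab : u ≠ v) :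
    N.graph.dist u v = 1 := dist_eq_one_iff_adj.mpr (adj_of_line hL ha hb hab)

lemma dist_tri {a b c : P} (h1 : N.graph.Reachable a b) (h2 : N.graph.Reachable b c) :
    N.graph.dist a c ≤ N.graph.dist a b + N.graph.dist b c := by
  obtain ⟨q, hq⟩ := h1.exists_walk_length_eq_dist
  obtain ⟨q', hq'⟩ := h2.exists_walk_length_eq_dist
  rw [← hq, ← hq', ← Walk.length_append]
  exact dist_le _

/-- A line consisting of exactly the three (distinct) points `u`, `v`, `w`. -/
structure Tri (L : Set P) (u v w : P) : Prop where
  hu : u ∈ L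
  hv : v ∈ L
  hw : w ∈ L
  huv : u ≠ v
  huw : u ≠ w
  hvw : v ≠ w
  htri : ∀ z ∈ L, z = u ∨ z = v ∨ z = w

lemma Tri.perm1 (h : Tri L u v w) : Tri L v u w :=
  ⟨h.hv, h.hu, h.hw, h.huv.symm, h.hvw, h.huw,
    fun z hz => by rcases h.htri z hz with rfl | rfl | rfl <;> tauto⟩

lemma exists_third (h3 : ∀ L ∈ N.lines, L.ncard = 3) (hL : L ∈ N.lines)
    (hu : u ∈ L) (hv : v ∈ L) (huv : u ≠ v) : ∃ w, Tri L u v w := by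
  have hc := h3 L hL
  have hfin : L.Finite := by
    rcases L.finite_or_infinite with h | h
    · exact h
    · rw [Set.Infinite.ncard h] at hc; omega
  obtain ⟨w, hwL, hwu, hwv⟩ : ∃ w ∈ L, w ≠ u ∧ w ≠ v := by
    by_contra hcon
    push_neg at hcon
    have hsub : L ⊆ {u, v} := by
      intro a ha
      rcases eq_or_ne a u with rfl | hau
      · exact Set.mem_insert _ _
      · simp [hcon a ha hau]
    have h1 := Set.ncard_le_ncard hsub (Set.toFinite _)
    have h2 := Set.ncard_insert_le u ({v} : Set P)
    simp only [Set.ncard_singleton] at h2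
    omega
  have hswc : ({u, v, w} : Set P).ncard = 3 :=
    Set.ncard_eq_three.mpr ⟨u, v, w, huv, Ne.symm hwu, Ne.symm hwv, rfl⟩
  have hset : ({u, v, w} : Set P) = L := by
    refine Set.eq_of_subset_of_ncard_le ?_ (by rw [hc, hswc]) hfin
    intro a ha
    simp only [Set.mem_insert_iff, Set.mem_singleton_iff] at ha
    rcases ha with rfl | rfl | rfl <;> assumption
  refine ⟨w, hu, hv, hwL, huv, Ne.symm hwu, Ne.symm hwv, ?_⟩
  intro z hz
  rw [← hset] at hz
  simpa using hz

lemma two_min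
    (hmin : ∀ a ∈ N.pts, ∀ M ∈ N.lines, ∃! b, b ∈ M ∧ ∀ c ∈ M, N.dist a b ≤ N.dist a c)
    (hp : p ∈ N.pts) (hL : L ∈ N.lines) (hu : u ∈ L) (hv : v ∈ L)
    (h1 : ∀ c ∈ L, N.graph.dist p u ≤ N.graph.dist p c)
    (h2 : ∀ c ∈ L, N.graph.dist p v ≤ N.graph.dist p c) : u = v := by
  obtain ⟨m, _, hm⟩ := hmin p hp L hL
  rw [hm u ⟨hu, h1⟩, hm v ⟨hv, h2⟩]

lemma T_lt
    (hmin : ∀ a ∈ N.pts, ∀ M ∈ N.lines, ∃! b, b ∈ M ∧ ∀ c ∈ M, N.dist a b ≤ N.dist a c)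
    (hp : p ∈ N.pts) (hL : L ∈ N.lines) (h : Tri L u v w)
    (he : N.graph.dist p u = N.graph.dist p v) :
    N.graph.dist p w < N.graph.dist p u := by
  by_contra hcon
  push_neg at hcon
  refine h.huv (two_min hmin hp hL h.hu h.hv ?_ ?_) <;>
    · intro c hc
      rcases h.htri c hc with rfl | rfl | rfl <;> omega

lemma T21 (hconn : ∀ a ∈ N.pts, ∀ b ∈ N.pts, N.graph.Reachable a b)
    (hmin : ∀ a ∈ N.pts, ∀ M ∈ N.lines, ∃! b, b ∈ M ∧ ∀ c ∈ M, N.dist a b ≤ N.dist a c)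
    (hp : p ∈ N.pts) (hL : L ∈ N.lines) (h : Tri L u v w)
    (h1 : N.graph.dist p u = 2) (h2 : N.graph.dist p v = 2) (hpw : p ≠ w) :
    N.graph.dist p w = 1 := by
  have hlt := T_lt hmin hp hL h (h1.trans h2.symm)
  have hpos := (hconn p hp w (N.lines_pts L hL h.hw)).pos_dist_of_ne hpw
  omega

lemma T12 (hconn : ∀ a ∈ N.pts, ∀ b ∈ N.pts, N.graph.Reachable a b)
    (hmin : ∀ a ∈ N.pts, ∀ M ∈ N.lines, ∃! b, b ∈ M ∧ ∀ c ∈ M, N.dist a b ≤ N.dist a c)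
    (hp : p ∈ N.pts) (hL : L ∈ N.lines) (h : Tri L u v w)
    (h1 : N.graph.dist p u = 1) (h2 : N.graph.dist p v = 2) :
    N.graph.dist p w = 2 := by
  have hpw : p ≠ w := by
    rintro rfl
    have := dist_line hL h.hw h.hv h.hvw.symm
    omega
  have hne1 : N.graph.dist p w ≠ 1 := by
    intro hcon
    refine h.huw (two_min hmin hp hL h.hu h.hw ?_ ?_) <;>
      · intro c hc
        rcases h.htri c hc with rfl | rfl | rfl <;> omega
  have huw1 : N.graph.dist u w = 1 := dist_line hL h.hu h.hw h.huw
  have hupts : u ∈ N.pts := N.lines_pts L hL h.hu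
  have hwpts : w ∈ N.pts := N.lines_pts L hL h.hw
  have hle := dist_tri (hconn p hp u hupts) (hconn u hupts w hwpts)
  have hpos := (hconn p hp w hwpts).pos_dist_of_ne hpw
  omega

lemma T11 (hconn : ∀ a ∈ N.pts, ∀ b ∈ N.pts, N.graph.Reachable a b)
    (hmin : ∀ a ∈ N.pts, ∀ M ∈ N.lines, ∃! b, b ∈ M ∧ ∀ c ∈ M, N.dist a b ≤ N.dist a c)
    (hp : p ∈ N.pts) (hL : L ∈ N.lines) (h : Tri L u v w)
    (h1 : N.graph.dist p u = 1) (h2 : N.graph.dist p v = 1) :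
    p = w := by
  have hlt := T_lt hmin hp hL h (h1.trans h2.symm)
  have h0 : N.graph.dist p w = 0 := by omega
  exact (hconn p hp w (N.lines_pts L hL h.hw)).dist_eq_zero_iff.mp h0

lemma ne_of_dist2 {s : P} (hL : L ∈ N.lines) (hs : s ∈ L) (hw : w ∈ L) (hsw : s ≠ w)
    (h2 : N.graph.dist p s = 2) : p ≠ w := by
  rintro rfl
  have := dist_line hL hw hs (Ne.symm hsw)
  omega

lemma cn_pts {x y z : P} (hz : N.graph.Adj x z ∧ N.graph.Adj z y) : z ∈ N.pts := by
  obtain ⟨⟨_, L, hL, _, hzL⟩, _⟩ := hz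
  exact N.lines_pts L hL hzL

lemma exists_cn (hconn : ∀ a ∈ N.pts, ∀ b ∈ N.pts, N.graph.Reachable a b)
    {x y : P} (hx : x ∈ N.pts) (hy : y ∈ N.pts) (hxy : N.graph.dist x y = 2) :
    ∃ z, N.graph.Adj x z ∧ N.graph.Adj z y := by
  obtain ⟨q, hq⟩ := (hconn x hx y hy).exists_walk_length_eq_dist
  rw [hxy] at hq
  cases q with
  | nil => simp at hq
  | cons h q' =>
    cases q' with
    | nil => simp at hq
    | cons h' q'' =>
      have hr : q''.length = 0 := by
        simp only [Walk.length_cons] at hq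
        omega
      have hcy := q''.eq_of_length_eq_zero hr
      exact ⟨_, h, hcy ▸ h'⟩

lemma cn_dist2 (hconn : ∀ a ∈ N.pts, ∀ b ∈ N.pts, N.graph.Reachable a b)
    (hmin : ∀ a ∈ N.pts, ∀ M ∈ N.lines, ∃! b, b ∈ M ∧ ∀ c ∈ M, N.dist a b ≤ N.dist a c)
    (h3 : ∀ L ∈ N.lines, L.ncard = 3)
    {x y a b : P} (hx : x ∈ N.pts) (hy : y ∈ N.pts) (hxy : N.graph.dist x y = 2)
    (ha : N.graph.Adj x a ∧ N.graph.Adj a y) (hb : N.graph.Adj x b ∧ N.graph.Adj b y)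
    (hab : a ≠ b) : N.graph.dist a b = 2 := by
  have hap : a ∈ N.pts := cn_pts ha
  have hbp : b ∈ N.pts := cn_pts hb
  have hxa : N.graph.dist x a = 1 := dist_eq_one_iff_adj.mpr ha.1
  have hxb : N.graph.dist x b = 1 := dist_eq_one_iff_adj.mpr hb.1
  have hay : N.graph.dist a y = 1 := dist_eq_one_iff_adj.mpr ha.2
  have hby : N.graph.dist b y = 1 := dist_eq_one_iff_adj.mpr hb.2
  have hnadj : N.graph.dist a b ≠ 1 := by
    intro hd
    obtain ⟨hne, K, hK, haK, hbK⟩ := dist_eq_one_iff_adj.mp hd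
    obtain ⟨w, hT⟩ := exists_third h3 hK haK hbK hne
    have hxw : x = w := T11 hconn hmin hx hK hT hxa hxb
    have hyw : y = w := by
      refine T11 hconn hmin hy hK hT ?_ ?_ <;> rw [SimpleGraph.dist_comm] <;> assumption
    rw [hxw, ← hyw, SimpleGraph.dist_self] at hxy
    omega
  have hax : N.graph.dist a x = 1 := by rwa [SimpleGraph.dist_comm]
  have hle := dist_tri (hconn a hap x hx) (hconn x hx b hbp)
  have hpos := (hconn a hap b hbp).pos_dist_of_ne hab
  omega


lemma five (N : Geom P)
    (hconn : ∀ a ∈ N.pts, ∀ b ∈ N.pts, N.graph.Reachable a b)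
    (hmin : ∀ a ∈ N.pts, ∀ M ∈ N.lines, ∃! b, b ∈ M ∧ ∀ c ∈ M, N.dist a b ≤ N.dist a c)
    (h3 : ∀ L ∈ N.lines, L.ncard = 3)
    {x y z1 z2 z3 z4 : P} (hx : x ∈ N.pts) (hy : y ∈ N.pts)
    (hxy : N.graph.dist x y = 2)
    (hc1 : N.graph.Adj x z1 ∧ N.graph.Adj z1 y)
    (hc2 : N.graph.Adj x z2 ∧ N.graph.Adj z2 y)
    (hc3 : N.graph.Adj x z3 ∧ N.graph.Adj z3 y)
    (hc4 : N.graph.Adj x z4 ∧ N.graph.Adj z4 y)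
    (h12 : z1 ≠ z2) (h13 : z1 ≠ z3) (h14 : z1 ≠ z4)
    (h23 : z2 ≠ z3) (h24 : z2 ≠ z4) (h34 : z3 ≠ z4) :
    ∃ r, (N.graph.Adj x r ∧ N.graph.Adj r y) ∧ r ≠ z1 ∧ r ≠ z2 ∧ r ≠ z3 ∧ r ≠ z4 ∧
      ∀ z, (N.graph.Adj x z ∧ N.graph.Adj z y) →
        z ≠ z1 → z ≠ z2 → z ≠ z3 → z ≠ z4 → z = r := by
  -- membership of the zᵢ
  have hz1p : z1 ∈ N.pts := cn_pts hc1
  have hz2p : z2 ∈ N.pts := cn_pts hc2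
  have hz3p : z3 ∈ N.pts := cn_pts hc3
  have hz4p : z4 ∈ N.pts := cn_pts hc4
  -- base distances
  have dyx : N.graph.dist y x = 2 := by rwa [SimpleGraph.dist_comm]
  have dxz1 : N.graph.dist x z1 = 1 := dist_eq_one_iff_adj.mpr hc1.1
  have dxz2 : N.graph.dist x z2 = 1 := dist_eq_one_iff_adj.mpr hc2.1
  have dxz3 : N.graph.dist x z3 = 1 := dist_eq_one_iff_adj.mpr hc3.1
  have dxz4 : N.graph.dist x z4 = 1 := dist_eq_one_iff_adj.mpr hc4.1
  have dz1x : N.graph.dist z1 x = 1 := by rwa [SimpleGraph.dist_comm]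
  have dz2x : N.graph.dist z2 x = 1 := by rwa [SimpleGraph.dist_comm]
  have dz3x : N.graph.dist z3 x = 1 := by rwa [SimpleGraph.dist_comm]
  have dz4x : N.graph.dist z4 x = 1 := by rwa [SimpleGraph.dist_comm]
  have dz1y : N.graph.dist z1 y = 1 := dist_eq_one_iff_adj.mpr hc1.2
  have dz2y : N.graph.dist z2 y = 1 := dist_eq_one_iff_adj.mpr hc2.2
  have dz3y : N.graph.dist z3 y = 1 := dist_eq_one_iff_adj.mpr hc3.2
  have dz4y : N.graph.dist z4 y = 1 := dist_eq_one_iff_adj.mpr hc4.2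
  have dyz1 : N.graph.dist y z1 = 1 := by rwa [SimpleGraph.dist_comm]
  have dyz2 : N.graph.dist y z2 = 1 := by rwa [SimpleGraph.dist_comm]
  have dyz3 : N.graph.dist y z3 = 1 := by rwa [SimpleGraph.dist_comm]
  have dyz4 : N.graph.dist y z4 = 1 := by rwa [SimpleGraph.dist_comm]
  have d12 : N.graph.dist z1 z2 = 2 := cn_dist2 hconn hmin h3 hx hy hxy hc1 hc2 h12
  have d13 : N.graph.dist z1 z3 = 2 := cn_dist2 hconn hmin h3 hx hy hxy hc1 hc3 h13
  have d14 : N.graph.dist z1 z4 = 2 := cn_dist2 hconn hmin h3 hx hy hxy hc1 hc4 h14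
  have d23 : N.graph.dist z2 z3 = 2 := cn_dist2 hconn hmin h3 hx hy hxy hc2 hc3 h23
  have d24 : N.graph.dist z2 z4 = 2 := cn_dist2 hconn hmin h3 hx hy hxy hc2 hc4 h24
  have d34 : N.graph.dist z3 z4 = 2 := cn_dist2 hconn hmin h3 hx hy hxy hc3 hc4 h34
  have d21 : N.graph.dist z2 z1 = 2 := by rwa [SimpleGraph.dist_comm]
  have d31 : N.graph.dist z3 z1 = 2 := by rwa [SimpleGraph.dist_comm]
  have d41 : N.graph.dist z4 z1 = 2 := by rwa [SimpleGraph.dist_comm]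
  have d32 : N.graph.dist z3 z2 = 2 := by rwa [SimpleGraph.dist_comm]
  have d42 : N.graph.dist z4 z2 = 2 := by rwa [SimpleGraph.dist_comm]
  have d43 : N.graph.dist z4 z3 = 2 := by rwa [SimpleGraph.dist_comm]
  -- Step 1: the line L1 through x and z1, with third point a1
  obtain ⟨-, L1, hL1, hxL1, hz1L1⟩ := hc1.1
  obtain ⟨a1, tri1⟩ := exists_third h3 hL1 hxL1 hz1L1 hc1.1.ne
  have ha1p : a1 ∈ N.pts := N.lines_pts L1 hL1 tri1.hw
  have dya1 : N.graph.dist y a1 = 2 := T12 hconn hmin hy hL1 tri1.perm1 dyz1 dyx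
  have dz2a1 : N.graph.dist z2 a1 = 2 := T12 hconn hmin hz2p hL1 tri1 dz2x d21
  have dz3a1 : N.graph.dist z3 a1 = 2 := T12 hconn hmin hz3p hL1 tri1 dz3x d31
  have dz4a1 : N.graph.dist z4 a1 = 2 := T12 hconn hmin hz4p hL1 tri1 dz4x d41
  have dxa1 : N.graph.dist x a1 = 1 := dist_line hL1 tri1.hu tri1.hw tri1.huw
  have dz1a1 : N.graph.dist z1 a1 = 1 := dist_line hL1 tri1.hv tri1.hw tri1.hvw
  have da1y : N.graph.dist a1 y = 2 := by rwa [SimpleGraph.dist_comm]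
  have da1z2 : N.graph.dist a1 z2 = 2 := by rwa [SimpleGraph.dist_comm]
  -- Step 2: the line M2 through z2 and y, with third point b2
  obtain ⟨-, M2, hM2, hz2M2, hyM2⟩ := hc2.2
  obtain ⟨b2, tri2⟩ := exists_third h3 hM2 hz2M2 hyM2 hc2.2.ne
  have dxb2 : N.graph.dist x b2 = 2 := T12 hconn hmin hx hM2 tri2 dxz2 hxy
  have dz1b2 : N.graph.dist z1 b2 = 2 := T12 hconn hmin hz1p hM2 tri2.perm1 dz1y d12
  have dz3b2 : N.graph.dist z3 b2 = 2 := T12 hconn hmin hz3p hM2 tri2.perm1 dz3y d32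
  have dz4b2 : N.graph.dist z4 b2 = 2 := T12 hconn hmin hz4p hM2 tri2.perm1 dz4y d42
  have dyb2 : N.graph.dist y b2 = 1 := dist_line hM2 tri2.hv tri2.hw tri2.hvw
  have dz2b2 : N.graph.dist z2 b2 = 1 := dist_line hM2 tri2.hu tri2.hw tri2.huw
  -- Step 3: a1 is adjacent to b2; the line K through them, with third point c
  have da1b2 : N.graph.dist a1 b2 = 1 :=
    T21 hconn hmin ha1p hM2 tri2 da1z2 da1y
      (ne_of_dist2 hM2 tri2.hv tri2.hw tri2.hvw da1y)
  obtain ⟨hne_ab, K, hK, ha1K, hb2K⟩ := dist_eq_one_iff_adj.mp da1b2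
  obtain ⟨c, triK⟩ := exists_third h3 hK ha1K hb2K hne_ab
  have hcp : c ∈ N.pts := N.lines_pts K hK triK.hw
  have dz3c : N.graph.dist z3 c = 1 :=
    T21 hconn hmin hz3p hK triK dz3a1 dz3b2
      (ne_of_dist2 hK triK.hu triK.hw triK.huw dz3a1)
  have dz4c : N.graph.dist z4 c = 1 :=
    T21 hconn hmin hz4p hK triK dz4a1 dz4b2
      (ne_of_dist2 hK triK.hu triK.hw triK.huw dz4a1)
  have dxc : N.graph.dist x c = 2 := T12 hconn hmin hx hK triK dxa1 dxb2
  have dyc : N.graph.dist y c = 2 := T12 hconn hmin hy hK triK.perm1 dyb2 dya1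
  have dz1c : N.graph.dist z1 c = 2 := T12 hconn hmin hz1p hK triK dz1a1 dz1b2
  have dz2c : N.graph.dist z2 c = 2 := T12 hconn hmin hz2p hK triK.perm1 dz2b2 dz2a1
  -- Step 4: the line E through z3 and c, with third point e
  obtain ⟨-, E, hE, hz3E, hcE⟩ := dist_eq_one_iff_adj.mp dz3c
  obtain ⟨e, triE⟩ := exists_third h3 hE hz3E hcE (dist_eq_one_iff_adj.mp dz3c).ne
  have hep : e ∈ N.pts := N.lines_pts E hE triE.hw
  have dz4c' : N.graph.dist z4 c = 1 := dz4c
  have dz1e : N.graph.dist z1 e = 1 :=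
    T21 hconn hmin hz1p hE triE d13 dz1c
      (ne_of_dist2 hE triE.hu triE.hw triE.huw d13)
  have dz2e : N.graph.dist z2 e = 1 :=
    T21 hconn hmin hz2p hE triE d23 dz2c
      (ne_of_dist2 hE triE.hu triE.hw triE.huw d23)
  have dz4e : N.graph.dist z4 e = 2 := T12 hconn hmin hz4p hE triE.perm1 dz4c d43
  have dxe : N.graph.dist x e = 2 := T12 hconn hmin hx hE triE dxz3 dxc
  have dye : N.graph.dist y e = 2 := T12 hconn hmin hy hE triE dyz3 dyc
  have dex : N.graph.dist e x = 2 := by rwa [SimpleGraph.dist_comm]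
  have dez4 : N.graph.dist e z4 = 2 := by rwa [SimpleGraph.dist_comm]
  -- Step 5: the line L4 through x and z4, with third point a4
  obtain ⟨-, L4, hL4, hxL4, hz4L4⟩ := hc4.1
  obtain ⟨a4, tri4⟩ := exists_third h3 hL4 hxL4 hz4L4 hc4.1.ne
  have dya4 : N.graph.dist y a4 = 2 := T12 hconn hmin hy hL4 tri4.perm1 dyz4 dyx
  have dz1a4 : N.graph.dist z1 a4 = 2 := T12 hconn hmin hz1p hL4 tri4 dz1x d14
  have dz2a4 : N.graph.dist z2 a4 = 2 := T12 hconn hmin hz2p hL4 tri4 dz2x d24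
  have dz3a4 : N.graph.dist z3 a4 = 2 := T12 hconn hmin hz3p hL4 tri4 dz3x d34
  have dxa4 : N.graph.dist x a4 = 1 := dist_line hL4 tri4.hu tri4.hw tri4.huw
  have dz4a4 : N.graph.dist z4 a4 = 1 := dist_line hL4 tri4.hv tri4.hw tri4.hvw
  have dea4 : N.graph.dist e a4 = 1 :=
    T21 hconn hmin hep hL4 tri4 dex dez4
      (ne_of_dist2 hL4 tri4.hu tri4.hw tri4.huw dex)
  -- Step 6: the line F through e and a4, with third point pp
  obtain ⟨hne_ea4, F, hF, heF, ha4F⟩ := dist_eq_one_iff_adj.mp dea4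
  obtain ⟨pp, triF⟩ := exists_third h3 hF heF ha4F hne_ea4
  have dyp : N.graph.dist y pp = 1 :=
    T21 hconn hmin hy hF triF dye dya4
      (ne_of_dist2 hF triF.hv triF.hw triF.hvw dya4)
  have dxp : N.graph.dist x pp = 2 := T12 hconn hmin hx hF triF.perm1 dxa4 dxe
  have dz1p : N.graph.dist z1 pp = 2 := T12 hconn hmin hz1p hF triF dz1e dz1a4
  have dz2p : N.graph.dist z2 pp = 2 := T12 hconn hmin hz2p hF triF dz2e dz2a4
  have dz3e : N.graph.dist z3 e = 1 := dist_line hE triE.hu triE.hw triE.huw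
  have dz3p : N.graph.dist z3 pp = 2 := T12 hconn hmin hz3p hF triF dz3e dz3a4
  have dz4p : N.graph.dist z4 pp = 2 := T12 hconn hmin hz4p hF triF.perm1 dz4a4 dz4e
  -- Step 7: the line R through y and pp, with third point r
  obtain ⟨hne_yp, R, hR, hyR, hpR⟩ := dist_eq_one_iff_adj.mp dyp
  obtain ⟨r, triR⟩ := exists_third h3 hR hyR hpR hne_yp
  have dxr : N.graph.dist x r = 1 :=
    T21 hconn hmin hx hR triR hxy dxp
      (ne_of_dist2 hR triR.hu triR.hw triR.huw hxy)
  have hrp : N.graph.dist r pp = 1 := dist_line hR triR.hw triR.hv triR.hvw.symm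
  have hrX : N.graph.Adj x r ∧ N.graph.Adj r y :=
    ⟨dist_eq_one_iff_adj.mp dxr, adj_of_line hR triR.hw triR.hu triR.huw.symm⟩
  refine ⟨r, hrX, ?_, ?_, ?_, ?_, ?_⟩
  · rintro rfl; omega
  · rintro rfl; omega
  · rintro rfl; omega
  · rintro rfl; omega
  · -- uniqueness
    intro z hz hzne1 hzne2 hzne3 hzne4
    have hzp : z ∈ N.pts := cn_pts hz
    have dzx : N.graph.dist z x = 1 := by
      rw [SimpleGraph.dist_comm]; exact dist_eq_one_iff_adj.mpr hz.1
    have dzy : N.graph.dist z y = 1 := dist_eq_one_iff_adj.mpr hz.2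
    have dzz1 : N.graph.dist z z1 = 2 := cn_dist2 hconn hmin h3 hx hy hxy hz hc1 hzne1
    have dzz2 : N.graph.dist z z2 = 2 := cn_dist2 hconn hmin h3 hx hy hxy hz hc2 hzne2
    have dzz3 : N.graph.dist z z3 = 2 := cn_dist2 hconn hmin h3 hx hy hxy hz hc3 hzne3
    have dzz4 : N.graph.dist z z4 = 2 := cn_dist2 hconn hmin h3 hx hy hxy hz hc4 hzne4
    have dza1 : N.graph.dist z a1 = 2 := T12 hconn hmin hzp hL1 tri1 dzx dzz1
    have dzb2 : N.graph.dist z b2 = 2 := T12 hconn hmin hzp hM2 tri2.perm1 dzy dzz2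
    have dzc : N.graph.dist z c = 1 :=
      T21 hconn hmin hzp hK triK dza1 dzb2
        (ne_of_dist2 hK triK.hu triK.hw triK.huw dza1)
    have dze : N.graph.dist z e = 2 := T12 hconn hmin hzp hE triE.perm1 dzc dzz3
    have dza4 : N.graph.dist z a4 = 2 := T12 hconn hmin hzp hL4 tri4 dzx dzz4
    have dzpp : N.graph.dist z pp = 1 :=
      T21 hconn hmin hzp hF triF dze dza4
        (ne_of_dist2 hF triF.hv triF.hw triF.hvw dza4)
    exact T11 hconn hmin hzp hR triR dzy dzpp

end NPaux


theorem statement_3 {P : Type*} (N : Geom P) (d : ℕ)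
    (hN : N.IsNearPolygon d)
    (h3 : ∀ L ∈ N.lines, L.ncard = 3)
    (x y : P) (hx : x ∈ N.pts) (hy : y ∈ N.pts) (hxy : N.dist x y = 2) :
    {z | N.graph.Adj x z ∧ N.graph.Adj z y}.ncard ∈ ({1, 2, 3, 5} : Set ℕ) := by
  classical
  obtain ⟨hconn, -, -, hmin⟩ := hN
  have hxy' : N.graph.dist x y = 2 := hxy
  obtain ⟨z0, hz0⟩ := NPaux.exists_cn hconn hx hy hxy'
  have hz0' : z0 ∈ {z | N.graph.Adj x z ∧ N.graph.Adj z y} := hz0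
  have hsmall : ∀ u v w : P,
      {z | N.graph.Adj x z ∧ N.graph.Adj z y} ⊆ {u, v, w} →
      {z | N.graph.Adj x z ∧ N.graph.Adj z y}.ncard ∈ ({1, 2, 3, 5} : Set ℕ) := by
    intro u v w hsub
    have hfin : {z | N.graph.Adj x z ∧ N.graph.Adj z y}.Finite :=
      (Set.toFinite ({u, v, w} : Set P)).subset hsub
    have h1 : 0 < {z | N.graph.Adj x z ∧ N.graph.Adj z y}.ncard :=
      (Set.ncard_pos hfin).mpr ⟨z0, hz0'⟩
    have h2 : {z | N.graph.Adj x z ∧ N.graph.Adj z y}.ncard ≤ 3 := by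
      refine le_trans (Set.ncard_le_ncard hsub (Set.toFinite _)) ?_
      have i1 := Set.ncard_insert_le u ({v, w} : Set P)
      have i2 := Set.ncard_insert_le v ({w} : Set P)
      have i3 := Set.ncard_singleton w
      omega
    simp only [Set.mem_insert_iff, Set.mem_singleton_iff]
    omega
  by_cases hfour : ∃ a b c e : P,
      (N.graph.Adj x a ∧ N.graph.Adj a y) ∧ (N.graph.Adj x b ∧ N.graph.Adj b y) ∧
      (N.graph.Adj x c ∧ N.graph.Adj c y) ∧ (N.graph.Adj x e ∧ N.graph.Adj e y) ∧
      a ≠ b ∧ a ≠ c ∧ a ≠ e ∧ b ≠ c ∧ b ≠ e ∧ c ≠ e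
  · obtain ⟨a, b, c, e, ha, hb, hc, he, hab, hac, hae, hbc, hbe, hce⟩ := hfour
    obtain ⟨r, hr, hra, hrb, hrc, hre, huniq⟩ :=
      NPaux.five N hconn hmin h3 hx hy hxy' ha hb hc he hab hac hae hbc hbe hce
    have hXeq : {z | N.graph.Adj x z ∧ N.graph.Adj z y} = {a, b, c, e, r} := by
      ext z
      simp only [Set.mem_setOf_eq, Set.mem_insert_iff, Set.mem_singleton_iff]
      constructor
      · intro hz
        by_cases e1 : z = a; · tauto
        by_cases e2 : z = b; · tauto
        by_cases e3 : z = c; · tauto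
        by_cases e4 : z = e; · tauto
        exact Or.inr (Or.inr (Or.inr (Or.inr (huniq z hz e1 e2 e3 e4))))
      · rintro (rfl | rfl | rfl | rfl | rfl)
        exacts [ha, hb, hc, he, hr]
    rw [hXeq]
    have hcard : ({a, b, c, e, r} : Set P).ncard = 5 := by
      rw [Set.ncard_insert_of_notMem (by simp [hab, hac, hae, hra.symm]),
        Set.ncard_insert_of_notMem (by simp [hbc, hbe, hrb.symm]),
        Set.ncard_insert_of_notMem (by simp [hce, hrc.symm]),
        Set.ncard_insert_of_notMem (by simp [hre.symm]),
        Set.ncard_singleton]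
    rw [hcard]
    simp
  · by_cases hA : ∃ z, (N.graph.Adj x z ∧ N.graph.Adj z y) ∧ z ≠ z0
    · obtain ⟨u, hu, hu0⟩ := hA
      by_cases hB : ∃ z, (N.graph.Adj x z ∧ N.graph.Adj z y) ∧ z ≠ z0 ∧ z ≠ u
      · obtain ⟨v, hv, hv0, hvu⟩ := hB
        refine hsmall z0 u v ?_
        intro z hz
        simp only [Set.mem_insert_iff, Set.mem_singleton_iff]
        by_contra hcon
        push_neg at hcon
        exact hfour ⟨z0, u, v, z, hz0, hu, hv, hz, Ne.symm hu0, Ne.symm hv0,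
          Ne.symm hcon.1, Ne.symm hvu, Ne.symm hcon.2.1, Ne.symm hcon.2.2⟩
      · refine hsmall z0 u u ?_
        intro z hz
        simp only [Set.mem_insert_iff, Set.mem_singleton_iff]
        by_contra hcon
        push_neg at hcon
        exact hB ⟨z, hz, hcon.1, hcon.2.1⟩
    · refine hsmall z0 z0 z0 ?_
      intro z hz
      simp only [Set.mem_insert_iff, Set.mem_singleton_iff]
      by_contra hcon
      push_neg at hcon
      exact hA ⟨z, hz, hcon.1⟩
end

section
/- Let N be a near polygon with point set P that is isometrically embedded as a full subgeometry in a near polygon N'. Then for every point x of N', the function f_x defined on P by f_x(y) = d(x,y) − d(x,P), where distances are computed in N' and d(x,P) is the minimum distance from x to a point of P, is a valuation of N. -/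
variable {P : Type*}

theorem statement_4 {P : Type*} (N N' : Geom P) (d d' : ℕ)
    (hN : N.IsNearPolygon d) (hN' : N'.IsNearPolygon d')
    (hsub : N.IsSubgeom N') (hiso : N.IsIsometric N')
    (x : P) (hx : x ∈ N'.pts) :
    N.IsValuation (fun y => (N'.dist x y : ℤ) - (N'.setDist x N.pts : ℤ)) := by
  obtain ⟨hconn', hdiam', _, hnear'⟩ := hN'
  obtain ⟨_, _, ⟨p0, hp0, _⟩, _⟩ := hN
  have hne : (N'.dist x '' N.pts).Nonempty := ⟨_, Set.mem_image_of_mem _ hp0⟩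
  have hsInf_le : ∀ y ∈ N.pts, N'.setDist x N.pts ≤ N'.dist x y := fun y hy =>
    Nat.sInf_le (Set.mem_image_of_mem _ hy)
  refine ⟨fun y hy => ?_, ?_, fun L hL => ?_⟩
  · simp only [sub_nonneg, Int.ofNat_le]
    exact hsInf_le y hy
  · obtain ⟨y, hy, hyd⟩ := Nat.sInf_mem hne
    exact ⟨y, hy, by simp [Geom.setDist, hyd]⟩
  · have hL' : L ∈ N'.lines := hsub.2 hL
    have hLpts : L ⊆ N'.pts := N'.lines_pts L hL'
    obtain ⟨y, ⟨hyL, hymin⟩, hyuniq⟩ := hnear' x hx L hL'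
    refine ⟨y, hyL, fun z hzL hzy => ?_⟩
    have hzy' : z ≠ y := hzy
    have hadj : N'.graph.Adj y z := ⟨hzy'.symm, L, hL', hyL, hzL⟩
    -- dist x z ≤ dist x y + 1
    have hreach : N'.graph.Reachable x y := hconn' x hx y (hLpts hyL)
    obtain ⟨w, hw⟩ := hreach.exists_walk_length_eq_dist
    have hle : N'.dist x z ≤ N'.dist x y + 1 := by
      have := N'.graph.dist_le (w.concat hadj)
      rwa [SimpleGraph.Walk.length_concat, hw] at this
    have hge : N'.dist x y ≤ N'.dist x z := hymin z hzL
    have hne2 : N'.dist x z ≠ N'.dist x y := by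
      intro heq
      apply hzy
      apply hyuniq
      refine ⟨hzL, fun w' hw' => ?_⟩
      rw [heq]; exact hymin w' hw'
    have : N'.dist x z = N'.dist x y + 1 := by omega
    simp only [this]
    push_cast
    ring
end

section
/- Let N be a near polygon with point set P that is isometrically embedded as a full subgeometry in a near polygon N', and for a point x of N' let f_x be the valuation of N defined by f_x(y) = d(x,y) − d(x,P). Then for any two distinct collinear points x1 and x2 of N', the valuations f_{x1} and f_{x2} are neighbouring, i.e. there exists ε ∈ {−1,0,1} such that |f_{x1}(y) − f_{x2}(y) + ε| ≤ 1 for every point y of N. -/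
variable {P : Type*}

lemma adj_dist_le {V : Type*} {G : SimpleGraph V} {a b : V} (hadj : G.Adj a b) (y : V) :
    G.dist a y ≤ G.dist b y + 1 := by
  by_cases hr : G.Reachable b y
  · obtain ⟨p, hp⟩ := hr.exists_walk_length_eq_dist
    have := G.dist_le (hadj.toWalk.append p)
    simpa [SimpleGraph.Walk.length_append, hp, Nat.add_comm] using this
  · have h1 : G.dist b y = 0 := SimpleGraph.dist_eq_zero_of_not_reachable hr
    have h2 : ¬ G.Reachable a y := fun h => hr (hadj.symm.reachable.trans h)
    simp [h1, SimpleGraph.dist_eq_zero_of_not_reachable h2]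

lemma setDist_le_setDist_add_one {P : Type*} (G : Geom P) {a b : P}
    (hadj : G.graph.Adj a b) (X : Set P) :
    G.setDist a X ≤ G.setDist b X + 1 := by
  rcases X.eq_empty_or_nonempty with h | h
  · simp [Geom.setDist, h, Nat.sInf_empty]
  · have hne : (G.dist b '' X).Nonempty := h.image _
    obtain ⟨p, hp, hdp⟩ := Nat.sInf_mem hne
    have h1 : G.setDist a X ≤ G.dist a p := Nat.sInf_le ⟨p, hp, rfl⟩
    have h2 : G.dist a p ≤ G.dist b p + 1 := adj_dist_le hadj p
    have : G.setDist b X = G.dist b p := hdp.symm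
    omega

theorem statement_5 {P : Type*} (N N' : Geom P) (d d' : ℕ)
    (hN : N.IsNearPolygon d) (hN' : N'.IsNearPolygon d')
    (hsub : N.IsSubgeom N') (hiso : N.IsIsometric N')
    (x₁ x₂ : P) (hx₁ : x₁ ∈ N'.pts) (hx₂ : x₂ ∈ N'.pts)
    (hne : x₁ ≠ x₂) (hadj : N'.graph.Adj x₁ x₂) :
    ∃ ε : ℤ, ε ∈ ({-1, 0, 1} : Set ℤ) ∧ ∀ y ∈ N.pts,
      |((N'.dist x₁ y : ℤ) - (N'.setDist x₁ N.pts : ℤ)) -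
        ((N'.dist x₂ y : ℤ) - (N'.setDist x₂ N.pts : ℤ)) + ε| ≤ 1 := by
  set s₁ := N'.setDist x₁ N.pts with hs₁
  set s₂ := N'.setDist x₂ N.pts with hs₂
  have h12 : s₁ ≤ s₂ + 1 := setDist_le_setDist_add_one N' hadj N.pts
  have h21 : s₂ ≤ s₁ + 1 := setDist_le_setDist_add_one N' hadj.symm N.pts
  refine ⟨(s₁ : ℤ) - s₂, ?_, ?_⟩
  · simp only [Set.mem_insert_iff, Set.mem_singleton_iff]
    omega
  · intro y hy
    have hd1 : N'.dist x₁ y ≤ N'.dist x₂ y + 1 := adj_dist_le hadj y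
    have hd2 : N'.dist x₂ y ≤ N'.dist x₁ y + 1 := adj_dist_le hadj.symm y
    rw [abs_le]
    constructor <;> push_cast <;> omega
end

section
/- Let N be a near hexagon in which every line is incident with exactly three points, containing an isometrically embedded full subgeometry H that is a generalized hexagon of order 2 possessing no ovoid. Then every point of N lies at distance at most 1 from the point set of H. -/
variable {P : Type*}

theorem statement_7 {P : Type*} (N H : Geom P)
    (hN : N.IsNearPolygon 3)
    (h3 : ∀ L ∈ N.lines, L.ncard = 3)
    (hsub : H.IsSubgeom N) (hiso : H.IsIsometric N)
    (hH : H.IsGenHexagon) (hord : H.HasOrder 2 2)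
    (hno : ¬ ∃ O : Set P, H.IsOvoid O) :
    ∀ x ∈ N.pts, N.setDist x H.pts ≤ 1 := by
  intro x hx
  by_contra h
  push_neg at h
  have h2 : 2 ≤ N.setDist x H.pts := h
  have hle : ∀ z ∈ H.pts, 2 ≤ N.dist x z := fun z hz =>
    le_trans h2 (Nat.sInf_le ⟨z, hz, rfl⟩)
  have hub : ∀ z ∈ H.pts, N.dist x z ≤ 3 := fun z hz =>
    hN.2.1 x hx z (hsub.1 hz)
  apply hno
  refine ⟨{y | y ∈ H.pts ∧ N.dist x y = 2}, fun y hy => hy.1, ?_⟩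
  intro L hL
  obtain ⟨y, ⟨hyL, hymin⟩, huniq⟩ := hN.2.2.2 x hx L (hsub.2 hL)
  have hyH : y ∈ H.pts := H.lines_pts L hL hyL
  have hy2 : N.dist x y = 2 := by
    rcases Nat.lt_or_ge (N.dist x y) 3 with h3' | h3'
    · have := hle y hyH; omega
    · exfalso
      have hy3 : N.dist x y = 3 := le_antisymm (hub y hyH) h3'
      have hmin3 : ∀ z ∈ L, 3 ≤ N.dist x z := fun z hz => hy3 ▸ hymin z hz
      obtain ⟨a, haL, b, hbL, hab⟩ := H.two_pts L hL
      have ha3 : N.dist x a = 3 :=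
        le_antisymm (hub a (H.lines_pts L hL haL)) (hmin3 a haL)
      have hb3 : N.dist x b = 3 :=
        le_antisymm (hub b (H.lines_pts L hL hbL)) (hmin3 b hbL)
      have hay : a = y := huniq a ⟨haL, fun w hw => ha3 ▸ hmin3 w hw⟩
      have hby : b = y := huniq b ⟨hbL, fun w hw => hb3 ▸ hmin3 w hw⟩
      exact hab (hay.trans hby.symm)
  refine ⟨y, ⟨hyL, hyH, hy2⟩, ?_⟩
  rintro z ⟨hzL, hzH, hz2⟩
  exact huniq z ⟨hzL, fun w hw => hz2 ▸ hle w (H.lines_pts L hL hw)⟩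
end

section
/- Let N be a near hexagon in which every line is incident with exactly three points, containing an isometrically embedded full subgeometry H (with point set P) that is a generalized hexagon of order 2. For every line {x1, x2, x3} of N, the three induced valuations f_{x1}, f_{x2}, f_{x3} of H, where f_{x_i}(y) = d(x_i,y) − d(x_i,P) for points y of H, are pairwise distinct. -/
variable {P : Type*}

section Helpers
variable {α β : Type*}

private lemma four_in_three {D E F a b c d : α} (hab : a ≠ b) (hac : a ≠ c) (had : a ≠ d)
    (hbc : b ≠ c) (hbd : b ≠ d) (hcd : c ≠ d)
    (ha : a ∈ ({D, E, F} : Set α)) (hb : b ∈ ({D, E, F} : Set α))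
    (hc : c ∈ ({D, E, F} : Set α)) (hd : d ∈ ({D, E, F} : Set α)) : False := by
  simp only [Set.mem_insert_iff, Set.mem_singleton_iff] at ha hb hc hd
  rcases ha with rfl | rfl | rfl <;> rcases hb with rfl | rfl | rfl <;>
    rcases hc with rfl | rfl | rfl <;> rcases hd with rfl | rfl | rfl <;> simp_all

private lemma ncard_le_two_of_no_three {s : Set α}
    (h : ∀ a b c, a ∈ s → b ∈ s → c ∈ s → a ≠ b → a ≠ c → b ≠ c → False) :
    s.Finite ∧ s.ncard ≤ 2 := by
  by_cases hne : s.Nonempty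
  · obtain ⟨a, ha⟩ := hne
    by_cases h1 : ∀ x ∈ s, x = a
    · have hsub : s ⊆ {a} := fun x hx => h1 x hx
      refine ⟨(Set.finite_singleton a).subset hsub, ?_⟩
      have := Set.ncard_le_ncard hsub (Set.finite_singleton a)
      simpa using le_trans this (by simp)
    · push_neg at h1
      obtain ⟨b, hb, hba⟩ := h1
      have hsub : s ⊆ {a, b} := by
        intro c hc
        by_contra hcn
        simp only [Set.mem_insert_iff, Set.mem_singleton_iff, not_or] at hcn
        exact h a b c ha hb hc (Ne.symm hba) (Ne.symm hcn.1) (Ne.symm hcn.2)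
      have hfin : ({a, b} : Set α).Finite := Set.toFinite _
      refine ⟨hfin.subset hsub, ?_⟩
      have h2 := Set.ncard_le_ncard hsub hfin
      have h3 : ({a, b} : Set α).ncard = 2 := Set.ncard_pair (Ne.symm hba)
      omega
  · rw [Set.not_nonempty_iff_eq_empty] at hne
    simp [hne]

private lemma union_bound {k : ℕ} {I : Set β} (hI : I.Finite) :
    ∀ (S : Set α) (t : β → Set α), S ⊆ (⋃ b ∈ I, t b) →
      (∀ b ∈ I, (t b).Finite ∧ (t b).ncard ≤ k) → S.Finite ∧ S.ncard ≤ k * I.ncard := by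
  refine Set.Finite.induction_on
    (motive := fun I _ => ∀ (S : Set α) (t : β → Set α), S ⊆ (⋃ b ∈ I, t b) →
      (∀ b ∈ I, (t b).Finite ∧ (t b).ncard ≤ k) → S.Finite ∧ S.ncard ≤ k * I.ncard) I hI ?_ ?_
  · intro S t hcov _
    have hS : S = ∅ := Set.subset_empty_iff.mp (by simpa using hcov)
    simp [hS]
  · intro b I' hb hfin IH S t hcov hfib
    have h1 : S ∩ (⋃ x ∈ I', t x) ⊆ ⋃ x ∈ I', t x := Set.inter_subset_right
    obtain ⟨hf1, hc1⟩ := IH _ t h1 (fun x hx => hfib x (Set.mem_insert_of_mem _ hx))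
    obtain ⟨hf2, hc2⟩ := hfib b (Set.mem_insert _ _)
    have hcov2 : S ⊆ t b ∪ (S ∩ ⋃ x ∈ I', t x) := by
      intro s hs
      have hm := hcov hs
      simp only [Set.mem_iUnion, Set.mem_insert_iff] at hm
      obtain ⟨x, hx, hsx⟩ := hm
      rcases hx with rfl | hx
      · exact Or.inl hsx
      · exact Or.inr ⟨hs, Set.mem_biUnion hx hsx⟩
    refine ⟨(hf2.union hf1).subset hcov2, ?_⟩
    have hm1 := Set.ncard_le_ncard hcov2 (hf2.union hf1)
    have hm2 := Set.ncard_union_le (t b) (S ∩ ⋃ x ∈ I', t x)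
    have hins : (insert b I').ncard = I'.ncard + 1 := Set.ncard_insert_of_notMem hb hfin
    rw [hins]
    have : k * (I'.ncard + 1) = k * I'.ncard + k := by ring
    omega

private lemma lb_two {S : Set α} (hS : S.Finite) :
    ∀ (T : Set β) (R : α → β → Prop), T.Finite →
      (∀ a ∈ S, ∃ b1 b2, b1 ≠ b2 ∧ b1 ∈ T ∧ b2 ∈ T ∧ R a b1 ∧ R a b2) →
      (∀ a a' b, a ∈ S → a' ∈ S → R a b → R a' b → a = a') →
      2 * S.ncard ≤ T.ncard := by
  refine Set.Finite.induction_on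
    (motive := fun S _ => ∀ (T : Set β) (R : α → β → Prop), T.Finite →
      (∀ a ∈ S, ∃ b1 b2, b1 ≠ b2 ∧ b1 ∈ T ∧ b2 ∈ T ∧ R a b1 ∧ R a b2) →
      (∀ a a' b, a ∈ S → a' ∈ S → R a b → R a' b → a = a') →
      2 * S.ncard ≤ T.ncard) S hS ?_ ?_
  · intro T R _ _ _; simp
  · intro a S' ha hS' IH T R hT h2 hdisj
    obtain ⟨b1, b2, hb12, hb1T, hb2T, hR1, hR2⟩ := h2 a (Set.mem_insert _ _)
    have hnotb : ∀ a' ∈ S', ∀ c, R a' c → c ≠ b1 ∧ c ≠ b2 := by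
      intro a' ha' c hRc
      constructor <;> rintro rfl
      · have := hdisj a' a c (Set.mem_insert_of_mem _ ha') (Set.mem_insert _ _) hRc hR1
        exact ha (this ▸ ha')
      · have := hdisj a' a c (Set.mem_insert_of_mem _ ha') (Set.mem_insert _ _) hRc hR2
        exact ha (this ▸ ha')
    have IH2 := IH (T \ {b1, b2}) R (hT.diff (t := _))
      (by
        intro a' ha'
        obtain ⟨c1, c2, hc12, hc1T, hc2T, hRc1, hRc2⟩ := h2 a' (Set.mem_insert_of_mem _ ha')
        obtain ⟨h11, h12⟩ := hnotb a' ha' c1 hRc1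
        obtain ⟨h21, h22⟩ := hnotb a' ha' c2 hRc2
        exact ⟨c1, c2, hc12, ⟨hc1T, by simp [h11, h12]⟩, ⟨hc2T, by simp [h21, h22]⟩, hRc1, hRc2⟩)
      (fun a1 a2 c h1 h2' => hdisj a1 a2 c (Set.mem_insert_of_mem _ h1) (Set.mem_insert_of_mem _ h2'))
    have hsub2 : ({b1, b2} : Set β) ⊆ T := by
      intro x hx
      rcases hx with rfl | hx
      · exact hb1T
      · rw [Set.mem_singleton_iff] at hx; exact hx ▸ hb2T
    have hunion : (T \ {b1, b2}) ∪ {b1, b2} = T := Set.diff_union_of_subset hsub2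
    have hcT : T.ncard = (T \ {b1, b2}).ncard + 2 := by
      conv_lhs => rw [← hunion]
      rw [Set.ncard_union_eq Set.disjoint_sdiff_left (hT.diff (t := _)) (Set.toFinite _),
        Set.ncard_pair hb12]
    have hinsc : (insert a S').ncard = S'.ncard + 1 := Set.ncard_insert_of_notMem ha hS'
    omega

private lemma lb_four {S : Set α} (hS : S.Finite) :
    ∀ (T : Set β) (R : α → β → Prop), T.Finite →
      (∀ a ∈ S, ∃ b1 b2 b3 b4, b1 ≠ b2 ∧ b1 ≠ b3 ∧ b1 ≠ b4 ∧ b2 ≠ b3 ∧ b2 ≠ b4 ∧ b3 ≠ b4 ∧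
        b1 ∈ T ∧ b2 ∈ T ∧ b3 ∈ T ∧ b4 ∈ T ∧ R a b1 ∧ R a b2 ∧ R a b3 ∧ R a b4) →
      (∀ a a' b, a ∈ S → a' ∈ S → R a b → R a' b → a = a') →
      4 * S.ncard ≤ T.ncard := by
  refine Set.Finite.induction_on
    (motive := fun S _ => ∀ (T : Set β) (R : α → β → Prop), T.Finite →
      (∀ a ∈ S, ∃ b1 b2 b3 b4, b1 ≠ b2 ∧ b1 ≠ b3 ∧ b1 ≠ b4 ∧ b2 ≠ b3 ∧ b2 ≠ b4 ∧ b3 ≠ b4 ∧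
        b1 ∈ T ∧ b2 ∈ T ∧ b3 ∈ T ∧ b4 ∈ T ∧ R a b1 ∧ R a b2 ∧ R a b3 ∧ R a b4) →
      (∀ a a' b, a ∈ S → a' ∈ S → R a b → R a' b → a = a') →
      4 * S.ncard ≤ T.ncard) S hS ?_ ?_
  · intro T R _ _ _; simp
  · intro a S' ha hS' IH T R hT h4 hdisj
    obtain ⟨b1, b2, b3, b4, h12, h13, h14, h23, h24, h34,
      hb1T, hb2T, hb3T, hb4T, hR1, hR2, hR3, hR4⟩ := h4 a (Set.mem_insert _ _)
    have hnotb : ∀ a' ∈ S', ∀ c, R a' c → c ≠ b1 ∧ c ≠ b2 ∧ c ≠ b3 ∧ c ≠ b4 := by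
      intro a' ha' c hRc
      refine ⟨?_, ?_, ?_, ?_⟩ <;> rintro rfl
      · exact ha ((hdisj a' a c (Set.mem_insert_of_mem _ ha') (Set.mem_insert _ _) hRc hR1) ▸ ha')
      · exact ha ((hdisj a' a c (Set.mem_insert_of_mem _ ha') (Set.mem_insert _ _) hRc hR2) ▸ ha')
      · exact ha ((hdisj a' a c (Set.mem_insert_of_mem _ ha') (Set.mem_insert _ _) hRc hR3) ▸ ha')
      · exact ha ((hdisj a' a c (Set.mem_insert_of_mem _ ha') (Set.mem_insert _ _) hRc hR4) ▸ ha')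
    have IH2 := IH (T \ {b1, b2, b3, b4}) R (hT.diff (t := _))
      (by
        intro a' ha'
        obtain ⟨c1, c2, c3, c4, g12, g13, g14, g23, g24, g34,
          hc1T, hc2T, hc3T, hc4T, hRc1, hRc2, hRc3, hRc4⟩ := h4 a' (Set.mem_insert_of_mem _ ha')
        obtain ⟨e11, e12, e13, e14⟩ := hnotb a' ha' c1 hRc1
        obtain ⟨e21, e22, e23, e24⟩ := hnotb a' ha' c2 hRc2
        obtain ⟨e31, e32, e33, e34⟩ := hnotb a' ha' c3 hRc3
        obtain ⟨e41, e42, e43, e44⟩ := hnotb a' ha' c4 hRc4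
        exact ⟨c1, c2, c3, c4, g12, g13, g14, g23, g24, g34,
          ⟨hc1T, by simp [e11, e12, e13, e14]⟩, ⟨hc2T, by simp [e21, e22, e23, e24]⟩,
          ⟨hc3T, by simp [e31, e32, e33, e34]⟩, ⟨hc4T, by simp [e41, e42, e43, e44]⟩,
          hRc1, hRc2, hRc3, hRc4⟩)
      (fun a1 a2 c h1 h2' => hdisj a1 a2 c (Set.mem_insert_of_mem _ h1) (Set.mem_insert_of_mem _ h2'))
    have hsub2 : ({b1, b2, b3, b4} : Set β) ⊆ T := by
      intro x hx
      simp only [Set.mem_insert_iff, Set.mem_singleton_iff] at hx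
      rcases hx with rfl | rfl | rfl | rfl <;> assumption
    have hunion : (T \ {b1, b2, b3, b4}) ∪ {b1, b2, b3, b4} = T := Set.diff_union_of_subset hsub2
    have hc4 : ({b1, b2, b3, b4} : Set β).ncard = 4 := by
      rw [Set.ncard_insert_of_notMem (by simp [h12, h13, h14]),
        Set.ncard_insert_of_notMem (by simp [h23, h24]), Set.ncard_pair h34]
    have hcT : T.ncard = (T \ {b1, b2, b3, b4}).ncard + 4 := by
      conv_lhs => rw [← hunion]
      rw [Set.ncard_union_eq Set.disjoint_sdiff_left (hT.diff (t := _)) (Set.toFinite _), hc4]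
    have hinsc : (insert a S').ncard = S'.ncard + 1 := Set.ncard_insert_of_notMem ha hS'
    omega

end Helpers

section GraphHelpers
variable {V : Type*} {G : SimpleGraph V}

private lemma walk_tri {x y z : V} (h1 : G.Reachable x y) (h2 : G.Reachable y z) :
    G.dist x z ≤ G.dist x y + G.dist y z := by
  obtain ⟨w1, hw1⟩ := h1.exists_walk_length_eq_dist
  obtain ⟨w2, hw2⟩ := h2.exists_walk_length_eq_dist
  calc G.dist x z ≤ (w1.append w2).length := SimpleGraph.dist_le _
    _ = G.dist x y + G.dist y z := by rw [SimpleGraph.Walk.length_append, hw1, hw2]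

private lemma stepdown {p a : V} {n : ℕ} (hr : G.Reachable p a) (hd : G.dist p a = n + 1) :
    ∃ z, G.Adj z a ∧ G.dist p z = n := by
  obtain ⟨w, hw⟩ := hr.symm.exists_walk_length_eq_dist
  rw [SimpleGraph.dist_comm, hd] at hw
  cases w with
  | nil => simp at hw
  | @cons _ z _ h q =>
    refine ⟨z, h.symm, ?_⟩
    have hq : q.length = n := by simpa using hw
    have hle : G.dist p z ≤ n := by
      have h1 := SimpleGraph.dist_le q.reverse
      rwa [SimpleGraph.Walk.length_reverse, hq] at h1
    have hza : G.dist z a = 1 := SimpleGraph.dist_eq_one_iff_adj.2 h.symm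
    have htri := walk_tri (q.reverse.reachable) (h.symm.reachable)
    rw [hza, hd] at htri
    omega

end GraphHelpers

section GeomHelpers
variable {P : Type*}

private lemma geom_adj {G : Geom P} {M : Set P} (hM : M ∈ G.lines) {x y : P}
    (hx : x ∈ M) (hy : y ∈ M) (hxy : x ≠ y) : G.graph.Adj x y :=
  ⟨hxy, M, hM, hx, hy⟩

private lemma geom_dist_one {G : Geom P} {M : Set P} (hM : M ∈ G.lines) {x y : P}
    (hx : x ∈ M) (hy : y ∈ M) (hxy : x ≠ y) : G.dist x y = 1 :=
  SimpleGraph.dist_eq_one_iff_adj.2 (geom_adj hM hx hy hxy)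

private lemma geom_tri {G : Geom P} {d : ℕ} (hnp : G.IsNearPolygon d) {x y z : P}
    (hx : x ∈ G.pts) (hy : y ∈ G.pts) (hz : z ∈ G.pts) :
    G.dist x z ≤ G.dist x y + G.dist y z :=
  walk_tri (hnp.1 x hx y hy) (hnp.1 y hy z hz)

private lemma geom_dist_zero {G : Geom P} {d : ℕ} (hnp : G.IsNearPolygon d) {x y : P}
    (hx : x ∈ G.pts) (hy : y ∈ G.pts) (h : G.dist x y = 0) : x = y :=
  ((hnp.1 x hx y hy).dist_eq_zero_iff).1 h

/-- On every line, there is a point `w` nearest to `p`, and all other points of the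
line are at distance exactly one more. -/
private lemma near_line {G : Geom P} {d : ℕ} (hnp : G.IsNearPolygon d) {p : P}
    (hp : p ∈ G.pts) {M : Set P} (hM : M ∈ G.lines) :
    ∃ w ∈ M, ∀ z ∈ M, z ≠ w → G.dist p z = G.dist p w + 1 := by
  obtain ⟨w, ⟨hwM, hwmin⟩, huniq⟩ := hnp.2.2.2 p hp M hM
  refine ⟨w, hwM, fun z hz hzw => ?_⟩
  have h1 : G.dist p w ≤ G.dist p z := hwmin z hz
  have h2 : G.dist p z ≤ G.dist p w + 1 := by
    have hwz : G.dist w z = 1 := geom_dist_one hM hwM hz (Ne.symm hzw)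
    calc G.dist p z ≤ G.dist p w + G.dist w z :=
          walk_tri (hnp.1 p hp w (G.lines_pts M hM hwM)) (geom_adj hM hwM hz (Ne.symm hzw)).reachable
      _ = G.dist p w + 1 := by rw [hwz]
  have h3 : G.dist p z ≠ G.dist p w := by
    intro he
    exact hzw (huniq z ⟨hz, fun u hu => he ▸ hwmin u hu⟩)
  omega

private lemma lines_thru {H : Geom P} (hord : H.HasOrder 2 2) {x : P} (hx : x ∈ H.pts) :
    ∃ D E F, D ≠ E ∧ D ≠ F ∧ E ≠ F ∧ {L | L ∈ H.lines ∧ x ∈ L} = {D, E, F} :=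
  Set.ncard_eq_three.1 (hord.2 x hx)

private lemma line_anatomy {H : Geom P} (hord : H.HasOrder 2 2) {M : Set P} (hM : M ∈ H.lines)
    {q : P} (hq : q ∈ M) : ∃ u v, u ≠ v ∧ u ≠ q ∧ v ≠ q ∧ M = {q, u, v} := by
  obtain ⟨a, b, c, hab, hac, hbc, rfl⟩ := Set.ncard_eq_three.1 (hord.1 M hM)
  simp only [Set.mem_insert_iff, Set.mem_singleton_iff] at hq
  rcases hq with rfl | rfl | rfl
  · exact ⟨b, c, hbc, Ne.symm hab, Ne.symm hac, rfl⟩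
  · exact ⟨a, c, hac, hab, Ne.symm hbc, by ext u; simp; tauto⟩
  · exact ⟨a, b, hab, hac, hbc, by ext u; simp; tauto⟩

private lemma line_fin {H : Geom P} (hord : H.HasOrder 2 2) {M : Set P} (hM : M ∈ H.lines) :
    M.Finite ∧ M.ncard ≤ 3 := by
  obtain ⟨a, b, c, hab, hac, hbc, rfl⟩ := Set.ncard_eq_three.1 (hord.1 M hM)
  refine ⟨Set.toFinite _, ?_⟩
  have t1 := Set.ncard_insert_le b ({c} : Set P)
  have t2 := Set.ncard_insert_le a ({b, c} : Set P)
  simp only [Set.ncard_singleton] at t1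
  omega

private lemma lines_thru_fin {H : Geom P} (hord : H.HasOrder 2 2) {x : P} (hx : x ∈ H.pts) :
    {L | L ∈ H.lines ∧ x ∈ L}.Finite ∧ {L | L ∈ H.lines ∧ x ∈ L}.ncard ≤ 3 := by
  obtain ⟨D, E, F, hDE, hDF, hEF, hset⟩ := lines_thru hord hx
  rw [hset]
  refine ⟨Set.toFinite _, ?_⟩
  have t1 := Set.ncard_insert_le E ({F} : Set (Set P))
  have t2 := Set.ncard_insert_le D ({E, F} : Set (Set P))
  simp only [Set.ncard_singleton] at t1
  omega

/-- Given adjacent `a b`, there are two distinct lines through `b` avoiding `a`. -/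
private lemma two_side_lines {H : Geom P} (hord : H.HasOrder 2 2) {a b : P}
    (hadj : H.graph.Adj a b) :
    ∃ M1 M2, M1 ≠ M2 ∧ M1 ∈ H.lines ∧ M2 ∈ H.lines ∧ b ∈ M1 ∧ b ∈ M2 ∧ a ∉ M1 ∧ a ∉ M2 := by
  obtain ⟨hne, L0, hL0, haL0, hbL0⟩ := hadj
  have hb : b ∈ H.pts := H.lines_pts L0 hL0 hbL0
  obtain ⟨D, E, F, hDE, hDF, hEF, hset⟩ := lines_thru hord hb
  have hD : D ∈ H.lines ∧ b ∈ D := by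
    have : D ∈ {L | L ∈ H.lines ∧ b ∈ L} := by rw [hset]; simp
    exact this
  have hE : E ∈ H.lines ∧ b ∈ E := by
    have : E ∈ {L | L ∈ H.lines ∧ b ∈ L} := by rw [hset]; simp
    exact this
  have hF : F ∈ H.lines ∧ b ∈ F := by
    have : F ∈ {L | L ∈ H.lines ∧ b ∈ L} := by rw [hset]; simp
    exact this
  have key : ∀ X Y : Set P, X ∈ H.lines → Y ∈ H.lines → b ∈ X → b ∈ Y → a ∈ X → a ∈ Y → X = Y :=
    fun X Y hX hY hbX hbY haX haY => H.unique_line X hX Y hY a b hne haX hbX haY hbY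
  by_cases haD : a ∈ D
  · refine ⟨E, F, hEF, hE.1, hF.1, hE.2, hF.2, ?_, ?_⟩
    · intro haE; exact hDE (key D E hD.1 hE.1 hD.2 hE.2 haD haE)
    · intro haF; exact hDF (key D F hD.1 hF.1 hD.2 hF.2 haD haF)
  · by_cases haE : a ∈ E
    · refine ⟨D, F, hDF, hD.1, hF.1, hD.2, hF.2, haD, ?_⟩
      intro haF; exact hEF (key E F hE.1 hF.1 hE.2 hF.2 haE haF)
    · exact ⟨D, E, hDE, hD.1, hE.1, hD.2, hE.2, haD, haE⟩

end GeomHelpers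

section GHHelpers
variable {P : Type*}

private lemma adj_pts {G : Geom P} {x y : P} (h : G.graph.Adj x y) : x ∈ G.pts ∧ y ∈ G.pts := by
  obtain ⟨-, L, hL, hx, hy⟩ := h
  exact ⟨G.lines_pts L hL hx, G.lines_pts L hL hy⟩

private lemma six_nbrs {H : Geom P} (hord : H.HasOrder 2 2) {p : P} (hp : p ∈ H.pts) :
    ∃ s : Set P, s.Finite ∧ s.ncard = 6 ∧ (∀ u, H.graph.Adj p u ↔ u ∈ s) := by
  obtain ⟨A, B, C, hAB, hAC, hBC, hset⟩ := lines_thru hord hp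
  have hA : A ∈ H.lines ∧ p ∈ A := by
    have : A ∈ {L | L ∈ H.lines ∧ p ∈ L} := by rw [hset]; simp
    exact this
  have hB : B ∈ H.lines ∧ p ∈ B := by
    have : B ∈ {L | L ∈ H.lines ∧ p ∈ L} := by rw [hset]; simp
    exact this
  have hC : C ∈ H.lines ∧ p ∈ C := by
    have : C ∈ {L | L ∈ H.lines ∧ p ∈ L} := by rw [hset]; simp
    exact this
  obtain ⟨a1, a2, ha12, ha1p, ha2p, hAeq⟩ := line_anatomy hord hA.1 hA.2
  obtain ⟨b1, b2, hb12, hb1p, hb2p, hBeq⟩ := line_anatomy hord hB.1 hB.2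
  obtain ⟨c1, c2, hc12, hc1p, hc2p, hCeq⟩ := line_anatomy hord hC.1 hC.2
  have ha1A : a1 ∈ A := by rw [hAeq]; simp
  have ha2A : a2 ∈ A := by rw [hAeq]; simp
  have hb1B : b1 ∈ B := by rw [hBeq]; simp
  have hb2B : b2 ∈ B := by rw [hBeq]; simp
  have hc1C : c1 ∈ C := by rw [hCeq]; simp
  have hc2C : c2 ∈ C := by rw [hCeq]; simp
  have cross : ∀ (X Y : Set P), X ∈ H.lines → Y ∈ H.lines → X ≠ Y → p ∈ X → p ∈ Y →
      ∀ u, u ∈ X → u ∈ Y → u = p := by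
    intro X Y hX hY hXY hpX hpY u huX huY
    by_contra hup
    exact hXY (H.unique_line X hX Y hY p u (Ne.symm hup) hpX huX hpY huY)
  have ha1b1 : a1 ≠ b1 := fun h => ha1p (cross A B hA.1 hB.1 hAB hA.2 hB.2 a1 ha1A (h ▸ hb1B))
  have ha1b2 : a1 ≠ b2 := fun h => ha1p (cross A B hA.1 hB.1 hAB hA.2 hB.2 a1 ha1A (h ▸ hb2B))
  have ha1c1 : a1 ≠ c1 := fun h => ha1p (cross A C hA.1 hC.1 hAC hA.2 hC.2 a1 ha1A (h ▸ hc1C))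
  have ha1c2 : a1 ≠ c2 := fun h => ha1p (cross A C hA.1 hC.1 hAC hA.2 hC.2 a1 ha1A (h ▸ hc2C))
  have ha2b1 : a2 ≠ b1 := fun h => ha2p (cross A B hA.1 hB.1 hAB hA.2 hB.2 a2 ha2A (h ▸ hb1B))
  have ha2b2 : a2 ≠ b2 := fun h => ha2p (cross A B hA.1 hB.1 hAB hA.2 hB.2 a2 ha2A (h ▸ hb2B))
  have ha2c1 : a2 ≠ c1 := fun h => ha2p (cross A C hA.1 hC.1 hAC hA.2 hC.2 a2 ha2A (h ▸ hc1C))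
  have ha2c2 : a2 ≠ c2 := fun h => ha2p (cross A C hA.1 hC.1 hAC hA.2 hC.2 a2 ha2A (h ▸ hc2C))
  have hb1c1 : b1 ≠ c1 := fun h => hb1p (cross B C hB.1 hC.1 hBC hB.2 hC.2 b1 hb1B (h ▸ hc1C))
  have hb1c2 : b1 ≠ c2 := fun h => hb1p (cross B C hB.1 hC.1 hBC hB.2 hC.2 b1 hb1B (h ▸ hc2C))
  have hb2c1 : b2 ≠ c1 := fun h => hb2p (cross B C hB.1 hC.1 hBC hB.2 hC.2 b2 hb2B (h ▸ hc1C))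
  have hb2c2 : b2 ≠ c2 := fun h => hb2p (cross B C hB.1 hC.1 hBC hB.2 hC.2 b2 hb2B (h ▸ hc2C))
  refine ⟨{a1, a2, b1, b2, c1, c2}, Set.toFinite _, ?_, ?_⟩
  · rw [Set.ncard_insert_of_notMem (by simp [ha12, ha1b1, ha1b2, ha1c1, ha1c2]),
      Set.ncard_insert_of_notMem (by simp [ha2b1, ha2b2, ha2c1, ha2c2]),
      Set.ncard_insert_of_notMem (by simp [hb12, hb1c1, hb1c2]),
      Set.ncard_insert_of_notMem (by simp [hb2c1, hb2c2]),
      Set.ncard_pair hc12]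
  · intro u
    constructor
    · rintro ⟨hup, M, hM, hpM, huM⟩
      have hMm : M ∈ {L | L ∈ H.lines ∧ p ∈ L} := ⟨hM, hpM⟩
      rw [hset] at hMm
      simp only [Set.mem_insert_iff, Set.mem_singleton_iff] at hMm
      rcases hMm with rfl | rfl | rfl
      · rw [hAeq] at huM
        simp only [Set.mem_insert_iff, Set.mem_singleton_iff] at huM ⊢
        rcases huM with rfl | rfl | rfl
        · exact absurd rfl hup
        · tauto
        · tauto
      · rw [hBeq] at huM
        simp only [Set.mem_insert_iff, Set.mem_singleton_iff] at huM ⊢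
        rcases huM with rfl | rfl | rfl
        · exact absurd rfl hup
        · tauto
        · tauto
      · rw [hCeq] at huM
        simp only [Set.mem_insert_iff, Set.mem_singleton_iff] at huM ⊢
        rcases huM with rfl | rfl | rfl
        · exact absurd rfl hup
        · tauto
        · tauto
    · intro hu
      simp only [Set.mem_insert_iff, Set.mem_singleton_iff] at hu
      rcases hu with rfl | rfl | rfl | rfl | rfl | rfl
      · exact geom_adj hA.1 hA.2 ha1A (Ne.symm ha1p)
      · exact geom_adj hA.1 hA.2 ha2A (Ne.symm ha2p)
      · exact geom_adj hB.1 hB.2 hb1B (Ne.symm hb1p)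
      · exact geom_adj hB.1 hB.2 hb2B (Ne.symm hb2p)
      · exact geom_adj hC.1 hC.2 hc1C (Ne.symm hc1p)
      · exact geom_adj hC.1 hC.2 hc2C (Ne.symm hc2p)

private lemma exists_dist_two {H : Geom P} (hH : H.IsGenHexagon) {p : P} (hp : p ∈ H.pts) :
    ∃ z ∈ H.pts, H.dist p z = 2 := by
  obtain ⟨a, haP, b, hbP, hab3⟩ := hH.1.2.2.1
  have main : ∀ c ∈ H.pts, 2 ≤ H.dist p c → ∃ z ∈ H.pts, H.dist p z = 2 := by
    intro c hc h2
    have h3 : H.dist p c ≤ 3 := hH.1.2.1 p hp c hc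
    have : H.dist p c = 2 ∨ H.dist p c = 3 := by omega
    rcases this with h | h
    · exact ⟨c, hc, h⟩
    · obtain ⟨z, hadj, hz2⟩ := stepdown (hH.1.1 p hp c hc) h
      exact ⟨z, (adj_pts hadj).1, hz2⟩
  have tri := walk_tri (hH.1.1 a haP p hp) (hH.1.1 p hp b hbP)
  have hcomm : H.dist a p = H.dist p a := SimpleGraph.dist_comm
  have hab3' : H.dist a b = 3 := hab3
  by_cases hpa : 2 ≤ H.dist p a
  · exact main a haP hpa
  · refine main b hbP ?_
    have h1 : H.dist a b ≤ H.dist a p + H.dist p b := tri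
    omega

private lemma out_line_prop {H : Geom P} (hH : H.IsGenHexagon) (hord : H.HasOrder 2 2)
    {p z : P} (hp : p ∈ H.pts) (hz : z ∈ H.pts) (hd2 : H.dist p z = 2) :
    ∃ O1 O2, O1 ≠ O2 ∧ O1 ∈ H.lines ∧ O2 ∈ H.lines ∧ z ∈ O1 ∧ z ∈ O2 ∧
      (∀ u ∈ O1, u ≠ z → H.dist p u = 3) ∧ (∀ u ∈ O2, u ≠ z → H.dist p u = 3) := by
  obtain ⟨y, ⟨hpy, hyz⟩, hyuniq⟩ := hH.2.2 p hp z hz hd2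
  obtain ⟨O1, O2, hO12, hO1, hO2, hzO1, hzO2, hyO1, hyO2⟩ := two_side_lines hord hyz
  have key : ∀ O, O ∈ H.lines → z ∈ O → y ∉ O → ∀ u ∈ O, u ≠ z → H.dist p u = 3 := by
    intro O hO hzO hyO u huO huz
    obtain ⟨w, hwO, hwstep⟩ := near_line hH.1 hp hO
    have hwz : w = z := by
      by_contra hwz
      have h1 : H.dist p z = H.dist p w + 1 := hwstep z hzO (fun h => hwz h.symm)
      have hw1 : H.dist p w = 1 := by omega
      have hadjpw : H.graph.Adj p w := SimpleGraph.dist_eq_one_iff_adj.1 hw1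
      have hadjwz : H.graph.Adj w z := geom_adj hO hwO hzO hwz
      have hwy := hyuniq w ⟨hadjpw, hadjwz⟩
      exact hyO (hwy ▸ hwO)
    subst hwz
    have := hwstep u huO huz
    omega
  exact ⟨O1, O2, hO12, hO1, hO2, hzO1, hzO2, key O1 hO1 hzO1 hyO1, key O2 hO2 hzO2 hyO2⟩

private lemma exists_dist_three {H : Geom P} (hH : H.IsGenHexagon) (hord : H.HasOrder 2 2)
    {p : P} (hp : p ∈ H.pts) : ∃ v ∈ H.pts, H.dist p v = 3 := by
  obtain ⟨z, hzP, hd2⟩ := exists_dist_two hH hp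
  obtain ⟨O1, O2, -, hO1, -, hzO1, -, hkey, -⟩ := out_line_prop hH hord hp hzP hd2
  obtain ⟨u, huO, v, hvO, huv⟩ := H.two_pts O1 hO1
  by_cases hu : u = z
  · subst hu
    exact ⟨v, H.lines_pts O1 hO1 hvO, hkey v hvO (Ne.symm huv)⟩
  · exact ⟨u, H.lines_pts O1 hO1 huO, hkey u huO hu⟩

end GHHelpers

/-- A generalized hexagon of order 2 contains no nonempty set of points, pairwise at
distance 2, meeting every line. -/
private lemma no_special_ovoid {P : Type*} {H : Geom P} (hH : H.IsGenHexagon)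
    (hord : H.HasOrder 2 2) {Q : Set P} (hQP : Q ⊆ H.pts)
    (hQ1 : ∀ M ∈ H.lines, ∃ q ∈ M, q ∈ Q)
    (hQ2 : ∀ q1 ∈ Q, ∀ q2 ∈ Q, q1 ≠ q2 → H.dist q1 q2 = 2)
    (hQne : Q.Nonempty) : False := by
  obtain ⟨p, hpQ⟩ := hQne
  have hp : p ∈ H.pts := hQP hpQ
  obtain ⟨s, hsfin, hs6, hsadj⟩ := six_nbrs hord hp
  set f : P → Set P := fun u => {q | q ∈ Q ∧ q ≠ p ∧ H.graph.Adj u q} with hf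
  have pairdist : ∀ (X : Set P), X ∈ H.lines → ∀ a b, a ∈ Q → b ∈ Q → a ≠ b →
      a ∈ X → b ∈ X → False := by
    intro X hX a b haQ hbQ hab haX hbX
    have h1 := geom_dist_one hX haX hbX hab
    have h2 := hQ2 a haQ b hbQ hab
    omega
  have hfib : ∀ u ∈ s, (f u).Finite ∧ (f u).ncard ≤ 2 := by
    intro u hu
    have hadjpu : H.graph.Adj p u := (hsadj u).2 hu
    apply ncard_le_two_of_no_three
    intro q1 q2 q3 hq1 hq2 hq3 h12 h13 h23
    obtain ⟨hq1Q, hq1p, hadj1⟩ := hq1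
    obtain ⟨hq2Q, hq2p, hadj2⟩ := hq2
    obtain ⟨hq3Q, hq3p, hadj3⟩ := hq3
    have hu_pts : u ∈ H.pts := (adj_pts hadjpu).2
    obtain ⟨D, E, F, hDE, hDF, hEF, hset⟩ := lines_thru hord hu_pts
    obtain ⟨-, Lp, hLp, huLp, hpLp⟩ := hadjpu.symm
    obtain ⟨-, L1, hL1, huL1, hq1L1⟩ := hadj1
    obtain ⟨-, L2, hL2, huL2, hq2L2⟩ := hadj2
    obtain ⟨-, L3, hL3, huL3, hq3L3⟩ := hadj3
    have mem4 : ∀ L, L ∈ H.lines → u ∈ L → L ∈ ({D, E, F} : Set (Set P)) := by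
      intro L hL huL
      rw [← hset]; exact ⟨hL, huL⟩
    have hLpL1 : Lp ≠ L1 := by
      rintro rfl; exact pairdist Lp hLp p q1 hpQ hq1Q (Ne.symm hq1p) hpLp hq1L1
    have hLpL2 : Lp ≠ L2 := by
      rintro rfl; exact pairdist Lp hLp p q2 hpQ hq2Q (Ne.symm hq2p) hpLp hq2L2
    have hLpL3 : Lp ≠ L3 := by
      rintro rfl; exact pairdist Lp hLp p q3 hpQ hq3Q (Ne.symm hq3p) hpLp hq3L3
    have hL1L2 : L1 ≠ L2 := by
      rintro rfl; exact pairdist L1 hL1 q1 q2 hq1Q hq2Q h12 hq1L1 hq2L2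
    have hL1L3 : L1 ≠ L3 := by
      rintro rfl; exact pairdist L1 hL1 q1 q3 hq1Q hq3Q h13 hq1L1 hq3L3
    have hL2L3 : L2 ≠ L3 := by
      rintro rfl; exact pairdist L2 hL2 q2 q3 hq2Q hq3Q h23 hq2L2 hq3L3
    exact four_in_three hLpL1 hLpL2 hLpL3 hL1L2 hL1L3 hL2L3
      (mem4 Lp hLp huLp) (mem4 L1 hL1 huL1) (mem4 L2 hL2 huL2) (mem4 L3 hL3 huL3)
  have hcov : Q \ {p} ⊆ ⋃ u ∈ s, f u := by
    intro q hq
    obtain ⟨hqQ, hqp⟩ := hq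
    have hqp' : q ≠ p := by simpa using hqp
    have hd2 : H.dist p q = 2 := hQ2 p hpQ q hqQ (Ne.symm hqp')
    obtain ⟨z, ⟨hpz, hzq⟩, -⟩ := hH.2.2 p hp q (hQP hqQ) hd2
    exact Set.mem_biUnion ((hsadj z).1 hpz) ⟨hqQ, hqp', hzq⟩
  obtain ⟨hQdfin, hQdcard⟩ := union_bound hsfin (Q \ {p}) f hcov hfib
  rw [hs6] at hQdcard
  have hQeq : insert p (Q \ {p}) = Q := by
    rw [Set.insert_diff_singleton, Set.insert_eq_of_mem hpQ]
  have hQfin : Q.Finite := hQeq ▸ hQdfin.insert p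
  have hQcard : Q.ncard ≤ 13 := by
    rw [← hQeq]
    have := Set.ncard_insert_le p (Q \ {p})
    omega
  have hlinescov : H.lines ⊆ ⋃ q ∈ Q, {L | L ∈ H.lines ∧ q ∈ L} := by
    intro M hM
    obtain ⟨q, hqM, hqQ⟩ := hQ1 M hM
    exact Set.mem_biUnion hqQ ⟨hM, hqM⟩
  obtain ⟨hlfin, hlcard⟩ := union_bound hQfin H.lines _ hlinescov
    (fun q hq => lines_thru_fin hord (hQP hq))
  have hPcov : H.pts ⊆ ⋃ M ∈ H.lines, id M := by
    intro x hx
    obtain ⟨L1, hL1, L2, hL2, -, hxL1, -⟩ := hH.2.1 x hx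
    exact Set.mem_biUnion hL1 hxL1
  obtain ⟨hPfin, -⟩ := union_bound hlfin H.pts id hPcov (fun M hM => line_fin hord hM)
  set Z : Set P := {z | z ∈ H.pts ∧ H.dist p z = 2} with hZdef
  have hZfin : Z.Finite := hPfin.subset (fun z hz => hz.1)
  have h24 : 4 * 6 ≤ Z.ncard := by
    rw [← hs6]
    refine lb_four hsfin Z (fun y z => H.graph.Adj y z ∧ H.dist p z = 2) hZfin ?_ ?_
    · intro y hy
      have hadjpy : H.graph.Adj p y := (hsadj y).2 hy
      obtain ⟨M1, M2, hM12, hM1, hM2, hyM1, hyM2, hpM1, hpM2⟩ := two_side_lines hord hadjpy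
      obtain ⟨z1, z2, hz12, hz1y, hz2y, hM1eq⟩ := line_anatomy hord hM1 hyM1
      obtain ⟨z3, z4, hz34, hz3y, hz4y, hM2eq⟩ := line_anatomy hord hM2 hyM2
      have main : ∀ M, M ∈ H.lines → y ∈ M → p ∉ M → ∀ z ∈ M, z ≠ y →
          z ∈ Z ∧ (H.graph.Adj y z ∧ H.dist p z = 2) := by
        intro M hM hyM hpM z hzM hzy
        have hadjyz : H.graph.Adj y z := geom_adj hM hyM hzM (Ne.symm hzy)
        have hzpts : z ∈ H.pts := (adj_pts hadjyz).2
        have e1 : H.dist p y = 1 := SimpleGraph.dist_eq_one_iff_adj.2 hadjpy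
        have e2 : H.dist y z = 1 := SimpleGraph.dist_eq_one_iff_adj.2 hadjyz
        have hle : H.dist p z ≤ 2 := by
          have t : H.dist p z ≤ H.dist p y + H.dist y z :=
            walk_tri (hadjpy.reachable) (hadjyz.reachable)
          omega
        have hne0 : H.dist p z ≠ 0 := by
          intro h0
          exact hpM ((geom_dist_zero hH.1 hp hzpts h0) ▸ hzM)
        have hne1 : H.dist p z ≠ 1 := by
          intro h1
          obtain ⟨w, hwM, hwstep⟩ := near_line hH.1 hp hM
          by_cases hwy : w = y
          · subst hwy
            have := hwstep z hzM hzy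
            omega
          · by_cases hwz : w = z
            · subst hwz
              have := hwstep y hyM (Ne.symm hzy)
              omega
            · have hy' := hwstep y hyM (fun h => hwy h.symm)
              have hw0 : H.dist p w = 0 := by omega
              exact hpM ((geom_dist_zero hH.1 hp (H.lines_pts M hM hwM) hw0) ▸ hwM)
        exact ⟨⟨hzpts, by omega⟩, hadjyz, by omega⟩
      obtain ⟨hZ1, hR1⟩ := main M1 hM1 hyM1 hpM1 z1 (by rw [hM1eq]; simp) hz1y
      obtain ⟨hZ2, hR2⟩ := main M1 hM1 hyM1 hpM1 z2 (by rw [hM1eq]; simp) hz2y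
      obtain ⟨hZ3, hR3⟩ := main M2 hM2 hyM2 hpM2 z3 (by rw [hM2eq]; simp) hz3y
      obtain ⟨hZ4, hR4⟩ := main M2 hM2 hyM2 hpM2 z4 (by rw [hM2eq]; simp) hz4y
      have cross : ∀ z, z ∈ M1 → z ∈ M2 → z ≠ y → False := by
        intro z hzM1 hzM2 hzy
        exact hM12 (H.unique_line M1 hM1 M2 hM2 y z (Ne.symm hzy) hyM1 hzM1 hyM2 hzM2)
      have hz13 : z1 ≠ z3 := by
        rintro rfl; exact cross z1 (by rw [hM1eq]; simp) (by rw [hM2eq]; simp) hz1y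
      have hz14 : z1 ≠ z4 := by
        rintro rfl; exact cross z1 (by rw [hM1eq]; simp) (by rw [hM2eq]; simp) hz1y
      have hz23 : z2 ≠ z3 := by
        rintro rfl; exact cross z2 (by rw [hM1eq]; simp) (by rw [hM2eq]; simp) hz2y
      have hz24 : z2 ≠ z4 := by
        rintro rfl; exact cross z2 (by rw [hM1eq]; simp) (by rw [hM2eq]; simp) hz2y
      exact ⟨z1, z2, z3, z4, hz12, hz13, hz14, hz23, hz24, hz34,
        hZ1, hZ2, hZ3, hZ4, hR1, hR2, hR3, hR4⟩
    · rintro y y' z hy hy' ⟨hadj, hd⟩ ⟨hadj', -⟩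
      have hzpts : z ∈ H.pts := (adj_pts hadj).2
      obtain ⟨w, -, huniq⟩ := hH.2.2 p hp z hzpts hd
      have e1 := huniq y ⟨(hsadj y).2 hy, hadj⟩
      have e2 := huniq y' ⟨(hsadj y').2 hy', hadj'⟩
      rw [e1, e2]
  have h48 : 2 * Z.ncard ≤ H.lines.ncard := by
    refine lb_two hZfin H.lines (fun z O => z ∈ O ∧ ∀ u ∈ O, u ≠ z → H.dist p u = 3) hlfin ?_ ?_
    · intro z hz
      obtain ⟨hzpts, hzd⟩ := hz
      obtain ⟨O1, O2, hO12, hO1, hO2, hzO1, hzO2, hk1, hk2⟩ := out_line_prop hH hord hp hzpts hzd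
      exact ⟨O1, O2, hO12, hO1, hO2, ⟨hzO1, hk1⟩, ⟨hzO2, hk2⟩⟩
    · rintro z z' O hz hz' ⟨hzO, hkey⟩ ⟨hz'O, -⟩
      by_contra hne
      have h3' := hkey z' hz'O (fun h => hne h.symm)
      have h2' := hz'.2
      omega
  omega

/-- If `x` and `x'` are points of `N` with `d(x,y) = d(x',y)+1` for all points `y` of the
embedded generalized hexagon, we obtain a contradiction. -/
private lemma core_contra {P : Type*} {N H : Geom P} (hN : N.IsNearPolygon 3)
    (hsub : H.IsSubgeom N) (hiso : H.IsIsometric N)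
    (hH : H.IsGenHexagon) (hord : H.HasOrder 2 2)
    {x x' : P} (hx : x ∈ N.pts) (hx' : x' ∈ N.pts)
    (hyp : ∀ y ∈ H.pts, N.dist x y = N.dist x' y + 1) : False := by
  obtain ⟨p0, hp0, -⟩ := hH.1.2.2.1
  have hPne : H.pts.Nonempty := ⟨p0, hp0⟩
  have hle2 : ∀ y ∈ H.pts, N.dist x' y ≤ 2 := by
    intro y hy
    have h3 := hN.2.1 x hx y (hsub.1 hy)
    have := hyp y hy
    omega
  have himg : (N.dist x' '' H.pts).Nonempty := hPne.image _
  obtain ⟨y0, hy0P, hy0d⟩ := Nat.sInf_mem himg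
  have hsd : N.setDist x' H.pts = N.dist x' y0 := hy0d.symm
  have hlb : ∀ y ∈ H.pts, N.setDist x' H.pts ≤ N.dist x' y := by
    intro y hy
    exact Nat.sInf_le ⟨y, hy, rfl⟩
  have hm2 : N.setDist x' H.pts ≤ 2 := by rw [hsd]; exact hle2 y0 hy0P
  have hcase : N.setDist x' H.pts = 0 ∨ N.setDist x' H.pts = 1 ∨ N.setDist x' H.pts = 2 := by
    omega
  rcases hcase with h0 | h1 | h2
  · have hd0 : N.dist x' y0 = 0 := by omega
    have hxy : x' = y0 := geom_dist_zero hN hx' (hsub.1 hy0P) hd0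
    have hx'P : x' ∈ H.pts := hxy ▸ hy0P
    obtain ⟨v, hvP, hv3⟩ := exists_dist_three hH hord hx'P
    have hN3 : N.dist x' v = 3 := by rw [← hiso x' hx'P v hvP]; exact hv3
    have := hle2 v hvP
    omega
  · have hx'nP : x' ∉ H.pts := by
      intro hmem'
      have hl := hlb x' hmem'
      have hself : N.dist x' x' = 0 := SimpleGraph.dist_self
      omega
    set Q : Set P := {y | y ∈ H.pts ∧ N.dist x' y = 1} with hQdef
    have hQ1 : ∀ M ∈ H.lines, ∃ q ∈ M, q ∈ Q ∧ ∀ r ∈ M, r ≠ q → r ∉ Q := by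
      intro M hM
      have hMN : M ∈ N.lines := hsub.2 hM
      obtain ⟨w, hwM, hwstep⟩ := near_line hN hx' hMN
      have hwP : w ∈ H.pts := H.lines_pts M hM hwM
      have hw2 : N.dist x' w ≤ 2 := hle2 w hwP
      have hwne0 : N.dist x' w ≠ 0 := by
        intro hz0
        exact hx'nP ((geom_dist_zero hN hx' (hsub.1 hwP) hz0) ▸ hwP)
      have hwne2 : N.dist x' w ≠ 2 := by
        intro h2'
        obtain ⟨u, huM, v, hvM, huv⟩ := H.two_pts M hM
        have hex : ∃ r ∈ M, r ≠ w := by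
          by_cases hu : u = w
          · exact ⟨v, hvM, by rw [← hu]; exact Ne.symm huv⟩
          · exact ⟨u, huM, hu⟩
        obtain ⟨r, hrM, hrw⟩ := hex
        have := hwstep r hrM hrw
        have := hle2 r (H.lines_pts M hM hrM)
        omega
      have hw1 : N.dist x' w = 1 := by omega
      refine ⟨w, hwM, ⟨hwP, hw1⟩, ?_⟩
      intro r hrM hrw hrQ
      have := hwstep r hrM hrw
      have := hrQ.2
      omega
    have hQ2 : ∀ q1 ∈ Q, ∀ q2 ∈ Q, q1 ≠ q2 → H.dist q1 q2 = 2 := by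
      intro q1 hq1 q2 hq2 hne
      obtain ⟨hq1P, hq1d⟩ := hq1
      obtain ⟨hq2P, hq2d⟩ := hq2
      have hNle : N.dist q1 q2 ≤ 2 := by
        have t : N.dist q1 q2 ≤ N.dist q1 x' + N.dist x' q2 :=
          walk_tri (hN.1 q1 (hsub.1 hq1P) x' hx') (hN.1 x' hx' q2 (hsub.1 hq2P))
        have hc : N.dist q1 x' = N.dist x' q1 := SimpleGraph.dist_comm
        omega
      have hHeq : H.dist q1 q2 = N.dist q1 q2 := hiso q1 hq1P q2 hq2P
      have hne0 : H.dist q1 q2 ≠ 0 := by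
        intro hz0
        exact hne (geom_dist_zero hH.1 hq1P hq2P hz0)
      have hne1 : H.dist q1 q2 ≠ 1 := by
        intro h1'
        have hadj : H.graph.Adj q1 q2 := SimpleGraph.dist_eq_one_iff_adj.1 h1'
        obtain ⟨-, M, hM, hq1M, hq2M⟩ := hadj
        obtain ⟨q, hqM, hqQ, hquniq⟩ := hQ1 M hM
        by_cases h : q1 = q
        · exact hquniq q2 hq2M (fun hh => hne (h.trans hh.symm)) ⟨hq2P, hq2d⟩
        · exact hquniq q1 hq1M h ⟨hq1P, hq1d⟩
      omega
    have hQne : Q.Nonempty := ⟨y0, hy0P, by omega⟩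
    exact no_special_ovoid hH hord (fun q hq => hq.1)
      (fun M hM => by
        obtain ⟨q, hqM, hqQ, -⟩ := hQ1 M hM
        exact ⟨q, hqM, hqQ⟩) hQ2 hQne
  · have hall : ∀ y ∈ H.pts, N.dist x' y = 2 := by
      intro y hy
      have := hlb y hy
      have := hle2 y hy
      omega
    obtain ⟨L1, hL1, -, -, -, hxL1, -⟩ := hH.2.1 p0 hp0
    have hL1N : L1 ∈ N.lines := hsub.2 hL1
    obtain ⟨w, hwM, hwstep⟩ := near_line hN hx' hL1N
    obtain ⟨u, huM, v, hvM, huv⟩ := H.two_pts L1 hL1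
    have hex : ∃ r ∈ L1, r ≠ w := by
      by_cases hu : u = w
      · exact ⟨v, hvM, by rw [← hu]; exact Ne.symm huv⟩
      · exact ⟨u, huM, hu⟩
    obtain ⟨r, hrM, hrw⟩ := hex
    have e1 := hwstep r hrM hrw
    have e2 := hall r (H.lines_pts L1 hL1 hrM)
    have e3 := hall w (H.lines_pts L1 hL1 hwM)
    omega

private lemma pair_distinct {P : Type*} {N H : Geom P} (hN : N.IsNearPolygon 3)
    (hsub : H.IsSubgeom N) (hiso : H.IsIsometric N)
    (hH : H.IsGenHexagon) (hord : H.HasOrder 2 2)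
    {a b c : P} (hab : a ≠ b) (hac : a ≠ c) (hbc : b ≠ c)
    (hL : ({a, b, c} : Set P) ∈ N.lines) :
    ∃ y ∈ H.pts, (N.dist a y : ℤ) - (N.setDist a H.pts : ℤ) ≠
      (N.dist b y : ℤ) - (N.setDist b H.pts : ℤ) := by
  by_contra hcon
  push_neg at hcon
  have haL : a ∈ ({a, b, c} : Set P) := by simp
  have hbL : b ∈ ({a, b, c} : Set P) := by simp
  have hcL : c ∈ ({a, b, c} : Set P) := by simp
  have haN : a ∈ N.pts := N.lines_pts _ hL haL
  have hbN : b ∈ N.pts := N.lines_pts _ hL hbL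
  have hcN : c ∈ N.pts := N.lines_pts _ hL hcL
  obtain ⟨p0, hp0, -⟩ := hH.1.2.2.1
  have hbnd : ∀ y ∈ H.pts, N.dist a y ≤ N.dist b y + 1 ∧ N.dist b y ≤ N.dist a y + 1 := by
    intro y hy
    have hyN := hsub.1 hy
    have e1 : N.dist a b = 1 := geom_dist_one hL haL hbL hab
    have e2 : N.dist b a = 1 := geom_dist_one hL hbL haL (Ne.symm hab)
    have t1 : N.dist a y ≤ N.dist a b + N.dist b y :=
      walk_tri (hN.1 a haN b hbN) (hN.1 b hbN y hyN)
    have t2 : N.dist b y ≤ N.dist b a + N.dist a y :=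
      walk_tri (hN.1 b hbN a haN) (hN.1 a haN y hyN)
    omega
  have hk := hcon p0 hp0
  obtain ⟨h1, h2⟩ := hbnd p0 hp0
  have hcases : (N.setDist a H.pts : ℤ) = (N.setDist b H.pts : ℤ) - 1 ∨
      (N.setDist a H.pts : ℤ) = (N.setDist b H.pts : ℤ) ∨
      (N.setDist a H.pts : ℤ) = (N.setDist b H.pts : ℤ) + 1 := by omega
  rcases hcases with hc1 | hc0 | hcp
  · have hyp : ∀ y ∈ H.pts, N.dist b y = N.dist a y + 1 := by
      intro y hy
      have := hcon y hy
      omega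
    exact core_contra hN hsub hiso hH hord hbN haN hyp
  · have heq : ∀ y ∈ H.pts, N.dist a y = N.dist b y := by
      intro y hy
      have := hcon y hy
      omega
    have hyp : ∀ y ∈ H.pts, N.dist a y = N.dist c y + 1 := by
      intro y hy
      have hyN := hsub.1 hy
      obtain ⟨w, hwL, hwstep⟩ := near_line hN hyN hL
      have hca : N.dist y a = N.dist a y := SimpleGraph.dist_comm
      have hcb : N.dist y b = N.dist b y := SimpleGraph.dist_comm
      have hcc : N.dist y c = N.dist c y := SimpleGraph.dist_comm
      have hw3 : w = a ∨ w = b ∨ w = c := by simpa using hwL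
      rcases hw3 with rfl | rfl | rfl
      · have := hwstep b hbL (Ne.symm hab)
        have := heq y hy
        omega
      · have := hwstep a haL hab
        have := heq y hy
        omega
      · have := hwstep a haL hac
        omega
    exact core_contra hN hsub hiso hH hord haN hcN hyp
  · have hyp : ∀ y ∈ H.pts, N.dist a y = N.dist b y + 1 := by
      intro y hy
      have := hcon y hy
      omega
    exact core_contra hN hsub hiso hH hord haN hbN hyp
theorem statement_9 {P : Type*} (N H : Geom P)
    (hN : N.IsNearPolygon 3)
    (h3 : ∀ L ∈ N.lines, L.ncard = 3)
    (hsub : H.IsSubgeom N) (hiso : H.IsIsometric N)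
    (hH : H.IsGenHexagon) (hord : H.HasOrder 2 2)
    (x₁ x₂ x₃ : P) (h12 : x₁ ≠ x₂) (h13 : x₁ ≠ x₃) (h23 : x₂ ≠ x₃)
    (hL : ({x₁, x₂, x₃} : Set P) ∈ N.lines) :
    (∃ y ∈ H.pts, (N.dist x₁ y : ℤ) - (N.setDist x₁ H.pts : ℤ) ≠
      (N.dist x₂ y : ℤ) - (N.setDist x₂ H.pts : ℤ)) ∧
    (∃ y ∈ H.pts, (N.dist x₁ y : ℤ) - (N.setDist x₁ H.pts : ℤ) ≠
      (N.dist x₃ y : ℤ) - (N.setDist x₃ H.pts : ℤ)) ∧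
    (∃ y ∈ H.pts, (N.dist x₂ y : ℤ) - (N.setDist x₂ H.pts : ℤ) ≠
      (N.dist x₃ y : ℤ) - (N.setDist x₃ H.pts : ℤ)) := by
  have e132 : ({x₁, x₃, x₂} : Set P) = {x₁, x₂, x₃} := by
    ext u; simp; tauto
  have e231 : ({x₂, x₃, x₁} : Set P) = {x₁, x₂, x₃} := by
    ext u; simp; tauto
  refine ⟨?_, ?_, ?_⟩
  · exact pair_distinct hN hsub hiso hH hord h12 h13 h23 hL
  · exact pair_distinct hN hsub hiso hH hord h13 h12 (Ne.symm h23) (by rw [e132]; exact hL)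
  · exact pair_distinct hN hsub hiso hH hord h23 (Ne.symm h12) (Ne.symm h13) (by rw [e231]; exact hL)
end

section
/- Let N be a near hexagon in which every line is incident with exactly three points, containing an isometrically embedded full subgeometry H that is a generalized hexagon of order 2. Then the set of points of N that do not belong to H and are collinear with at least two points of H is finite. -/
variable {P : Type*}

/- ---------------- Auxiliary lemmas ---------------- -/

section Aux

variable {P' : Type*} (G : Geom P')

lemma Geom.adj_of_line {L : Set P'} {a b : P'} (hL : L ∈ G.lines) (ha : a ∈ L) (hb : b ∈ L)
    (hne : a ≠ b) : G.graph.Adj a b := ⟨hne, L, hL, ha, hb⟩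

lemma Geom.pts_of_adj {a b : P'} (h : G.graph.Adj a b) : a ∈ G.pts ∧ b ∈ G.pts := by
  obtain ⟨-, L, hL, ha, hb⟩ := h
  exact ⟨G.lines_pts L hL ha, G.lines_pts L hL hb⟩

lemma Geom.dist_adj {a b : P'} (h : G.graph.Adj a b) : G.dist a b = 1 :=
  SimpleGraph.dist_eq_one_iff_adj.mpr h

lemma Geom.adj_of_dist_one {a b : P'} (h : G.dist a b = 1) : G.graph.Adj a b :=
  SimpleGraph.dist_eq_one_iff_adj.mp h

lemma Geom.dist_self' (a : P') : G.dist a a = 0 := SimpleGraph.dist_self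

lemma Geom.dist_comm' (a b : P') : G.dist a b = G.dist b a := SimpleGraph.dist_comm

lemma Geom.line_finite (h3 : ∀ L ∈ G.lines, L.ncard = 3) {L : Set P'} (hL : L ∈ G.lines) :
    L.Finite :=
  Set.finite_of_ncard_ne_zero (by rw [h3 L hL]; norm_num)

/-- A line with three points: given two of them, produce the third. -/
lemma Geom.third_point (h3 : ∀ L ∈ G.lines, L.ncard = 3) {L : Set P'} {a b : P'}
    (hL : L ∈ G.lines) (ha : a ∈ L) (hb : b ∈ L) (hab : a ≠ b) :
    ∃ c ∈ L, c ≠ a ∧ c ≠ b ∧ ∀ w ∈ L, w = a ∨ w = b ∨ w = c := by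
  have hfin := G.line_finite h3 hL
  have hcard := h3 L hL
  have hex : ∃ c ∈ L, c ∉ ({a, b} : Set P') := by
    by_contra hcon
    push_neg at hcon
    have h2 : L.ncard ≤ ({a, b} : Set P').ncard :=
      Set.ncard_le_ncard hcon (Set.toFinite _)
    have h3' : ({a, b} : Set P').ncard ≤ 2 :=
      (Set.ncard_insert_le a {b}).trans (by simp)
    omega
  obtain ⟨c, hcL, hc⟩ := hex
  simp only [Set.mem_insert_iff, Set.mem_singleton_iff, not_or] at hc
  refine ⟨c, hcL, hc.1, hc.2, ?_⟩
  have hsub : ({a, b, c} : Set P') ⊆ L := by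
    intro w hw
    rcases hw with rfl | hw
    · exact ha
    rcases hw with rfl | hw
    · exact hb
    · rw [Set.mem_singleton_iff] at hw; exact hw ▸ hcL
  have h3c : ({a, b, c} : Set P').ncard = 3 :=
    Set.ncard_eq_three.mpr ⟨a, b, c, hab, Ne.symm hc.1, Ne.symm hc.2, rfl⟩
  have heq : ({a, b, c} : Set P') = L :=
    Set.eq_of_subset_of_ncard_le hsub (by rw [hcard, h3c]) hfin
  intro w hw
  rw [← heq] at hw
  simpa using hw

variable {G}

/-- Two distinct points of a line cannot both realize the minimum distance. -/
lemma two_min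
    (hnear : ∀ x ∈ G.pts, ∀ L ∈ G.lines, ∃! y, y ∈ L ∧ ∀ z ∈ L, G.dist x y ≤ G.dist x z)
    {x : P'} {L : Set P'} {a b : P'} (hx : x ∈ G.pts) (hL : L ∈ G.lines)
    (haL : a ∈ L) (hbL : b ∈ L) (hab : a ≠ b) (heq : G.dist x a = G.dist x b)
    (hmin : ∀ z ∈ L, G.dist x a ≤ G.dist x z) : False := by
  obtain ⟨m, -, hu⟩ := hnear x hx L hL
  have h1 := hu a ⟨haL, hmin⟩
  have h2 := hu b ⟨hbL, fun z hz => by rw [← heq]; exact hmin z hz⟩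
  exact hab (h1.trans h2.symm)

/-- If `x` is at distance 1 from two distinct points of a line, it is on the line. -/
lemma mem_line_of_two_dist_one
    (hreach : ∀ x ∈ G.pts, ∀ y ∈ G.pts, G.graph.Reachable x y)
    (hnear : ∀ x ∈ G.pts, ∀ L ∈ G.lines, ∃! y, y ∈ L ∧ ∀ z ∈ L, G.dist x y ≤ G.dist x z)
    {x : P'} {L : Set P'} {a b : P'} (hx : x ∈ G.pts) (hL : L ∈ G.lines)
    (haL : a ∈ L) (hbL : b ∈ L) (hab : a ≠ b)
    (h1a : G.dist x a = 1) (h1b : G.dist x b = 1) : x ∈ L := by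
  by_contra hxL
  refine two_min hnear hx hL haL hbL hab (h1a.trans h1b.symm) ?_
  intro z hz
  have hz' : z ∈ G.pts := G.lines_pts L hL hz
  have hne : x ≠ z := fun h => hxL (h ▸ hz)
  have hpos : 0 < G.dist x z := (hreach x hx z hz').pos_dist_of_ne hne
  rw [h1a]
  omega

lemma dist_le_adj
    (hreach : ∀ x ∈ G.pts, ∀ y ∈ G.pts, G.graph.Reachable x y)
    {x a c : P'} (hx : x ∈ G.pts) (ha : a ∈ G.pts) (hadj : G.graph.Adj a c) :
    G.dist x c ≤ G.dist x a + 1 := by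
  obtain ⟨p, hp⟩ := (hreach x hx a ha).exists_walk_length_eq_dist
  have := SimpleGraph.dist_le (p.concat hadj)
  rw [SimpleGraph.Walk.length_concat, hp] at this
  exact this

/-- If `x ∉ L` is at distance 1 from `a ∈ L`, it is at distance 2 from any other point of `L`. -/
lemma dist_two_of_third
    (hreach : ∀ x ∈ G.pts, ∀ y ∈ G.pts, G.graph.Reachable x y)
    (hnear : ∀ x ∈ G.pts, ∀ L ∈ G.lines, ∃! y, y ∈ L ∧ ∀ z ∈ L, G.dist x y ≤ G.dist x z)
    {x : P'} {L : Set P'} {a c : P'} (hx : x ∈ G.pts) (hL : L ∈ G.lines) (hxL : x ∉ L)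
    (haL : a ∈ L) (hcL : c ∈ L) (hac : a ≠ c) (h1 : G.dist x a = 1) : G.dist x c = 2 := by
  have hc : c ∈ G.pts := G.lines_pts L hL hcL
  have ha : a ∈ G.pts := G.lines_pts L hL haL
  have hub : G.dist x c ≤ 2 := by
    have := dist_le_adj hreach hx ha (G.adj_of_line hL haL hcL hac)
    rw [h1] at this; exact this
  have hne : x ≠ c := fun h => hxL (h ▸ hcL)
  have hlb : 0 < G.dist x c := (hreach x hx c hc).pos_dist_of_ne hne
  have hne1 : G.dist x c ≠ 1 := fun h1c =>
    hxL (mem_line_of_two_dist_one hreach hnear hx hL haL hcL hac h1 h1c)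
  omega

/-- If `x ∉ L` is at distance 2 from two distinct points of the 3-point line `L`,
it is at distance 1 from the third. -/
lemma dist_one_of_two_two
    (hreach : ∀ x ∈ G.pts, ∀ y ∈ G.pts, G.graph.Reachable x y)
    (hnear : ∀ x ∈ G.pts, ∀ L ∈ G.lines, ∃! y, y ∈ L ∧ ∀ z ∈ L, G.dist x y ≤ G.dist x z)
    {x : P'} {L : Set P'} {a b c : P'} (hx : x ∈ G.pts) (hL : L ∈ G.lines) (hxL : x ∉ L)
    (haL : a ∈ L) (hbL : b ∈ L) (hcL : c ∈ L) (hab : a ≠ b)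
    (hall : ∀ w ∈ L, w = a ∨ w = b ∨ w = c)
    (h2a : G.dist x a = 2) (h2b : G.dist x b = 2) : G.dist x c = 1 := by
  have hc : c ∈ G.pts := G.lines_pts L hL hcL
  have hne : x ≠ c := fun h => hxL (h ▸ hcL)
  have hlb : 0 < G.dist x c := (hreach x hx c hc).pos_dist_of_ne hne
  by_contra hne1
  have h2 : 2 ≤ G.dist x c := by omega
  refine two_min hnear hx hL haL hbL hab (h2a.trans h2b.symm) ?_
  intro z hz
  rcases hall z hz with rfl | rfl | rfl
  · exact le_refl _
  · rw [h2a, h2b]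
  · rw [h2a]; exact h2

end Aux

section Core

variable {P' : Type*} {G : Geom P'}

/-- The key construction: from two common neighbours `a, b` (at distance 2 from
each other) of two points `y, z` at distance 2, construct a point `s` at distance 2
from `y` and `z` that is adjacent to all "other" common neighbours of `y` and `z`. -/
lemma scons
    (hreach : ∀ x ∈ G.pts, ∀ y ∈ G.pts, G.graph.Reachable x y)
    (hnear : ∀ x ∈ G.pts, ∀ L ∈ G.lines, ∃! y, y ∈ L ∧ ∀ z ∈ L, G.dist x y ≤ G.dist x z)
    (h3 : ∀ L ∈ G.lines, L.ncard = 3)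
    {y z a b : P'} (hy : y ∈ G.pts) (hz : z ∈ G.pts) (hyz : G.dist y z = 2)
    (hay : G.graph.Adj a y) (haz : G.graph.Adj a z)
    (hby : G.graph.Adj b y) (hbz : G.graph.Adj b z)
    (hab : G.dist a b = 2) :
    ∃ s ∈ G.pts, G.dist y s = 2 ∧ G.dist z s = 2 ∧
      (∀ k, G.graph.Adj k y → G.graph.Adj k z → G.dist k a = 2 → G.dist k b = 2 →
        G.dist k s = 1) ∧
      (∀ k ∈ G.pts, G.dist k y = 2 → G.dist k z = 2 → G.dist k a = 1 → G.dist k b = 1 →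
        G.dist k s = 1) := by
  have hyz_ne : y ≠ z := by
    intro h; rw [h, G.dist_self'] at hyz; exact absurd hyz (by norm_num)
  have hab_ne : a ≠ b := by
    intro h; rw [h, G.dist_self'] at hab; exact absurd hab (by norm_num)
  obtain ⟨hay_ne, La, hLa, haLa, hyLa⟩ := hay
  obtain ⟨e, heLa, hea, hey, hallA⟩ := G.third_point h3 hLa haLa hyLa hay_ne
  have he_pts : e ∈ G.pts := G.lines_pts _ hLa heLa
  have hza : G.dist z a = 1 := G.dist_adj haz.symm
  have hzLa : z ∉ La := by
    intro hzm
    rcases hallA z hzm with h | h | h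
    · exact haz.ne h.symm
    · exact hyz_ne h.symm
    · have hadj : G.graph.Adj e y := G.adj_of_line hLa heLa hyLa hey
      rw [h, G.dist_adj hadj.symm] at hyz
      exact absurd hyz (by norm_num)
  have hze : G.dist z e = 2 :=
    dist_two_of_third hreach hnear hz hLa hzLa haLa heLa hea.symm hza
  obtain ⟨hbz_ne, Lb, hLb, hbLb, hzLb⟩ := hbz
  obtain ⟨f, hfLb, hfb, hfz, hallB⟩ := G.third_point h3 hLb hbLb hzLb hbz_ne
  have hf_pts : f ∈ G.pts := G.lines_pts _ hLb hfLb
  have hyb : G.dist y b = 1 := G.dist_adj hby.symm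
  have hyLb : y ∉ Lb := by
    intro hym
    rcases hallB y hym with h | h | h
    · exact hby.ne h.symm
    · exact hyz_ne h
    · have hadj : G.graph.Adj f z := G.adj_of_line hLb hfLb hzLb hfz
      rw [h, G.dist_adj hadj] at hyz
      exact absurd hyz (by norm_num)
  have hyf : G.dist y f = 2 :=
    dist_two_of_third hreach hnear hy hLb hyLb hbLb hfLb hfb.symm hyb
  -- b versus La
  have hb_pts : b ∈ G.pts := (G.pts_of_adj hby).1
  have hbLa : b ∉ La := by
    intro hbm
    rcases hallA b hbm with h | h | h
    · exact hab_ne h.symm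
    · exact hby.ne h
    · have hadj : G.graph.Adj a e := G.adj_of_line hLa haLa heLa hea.symm
      rw [h, G.dist_adj hadj] at hab
      exact absurd hab (by norm_num)
  have hbe : G.dist b e = 2 :=
    dist_two_of_third hreach hnear hb_pts hLa hbLa hyLa heLa hey.symm
      (G.dist_adj hby)
  -- e versus Lb
  have heLb : e ∉ Lb := by
    intro hem
    rcases hallB e hem with h | h | h
    · rw [h, G.dist_self'] at hbe; exact absurd hbe (by norm_num)
    · rw [h, G.dist_self'] at hze; exact absurd hze (by norm_num)
    · have hadj : G.graph.Adj b f := G.adj_of_line hLb hbLb hfLb hfb.symm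
      rw [h, G.dist_adj hadj] at hbe
      exact absurd hbe (by norm_num)
  have hef : G.dist e f = 1 :=
    dist_one_of_two_two hreach hnear he_pts hLb heLb hbLb hzLb hfLb hbz_ne hallB
      (by rw [G.dist_comm']; exact hbe) (by rw [G.dist_comm']; exact hze)
  obtain ⟨hef_ne, Ls, hLs, heLs, hfLs⟩ := G.adj_of_dist_one hef
  obtain ⟨s, hsLs, hse, hsf, hallS⟩ := G.third_point h3 hLs heLs hfLs hef_ne
  have hs_pts : s ∈ G.pts := G.lines_pts _ hLs hsLs
  have hye : G.dist y e = 1 := G.dist_adj (G.adj_of_line hLa hyLa heLa hey.symm)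
  have hzf : G.dist z f = 1 := G.dist_adj (G.adj_of_line hLb hzLb hfLb hfz.symm)
  have hyLs : y ∉ Ls := by
    intro hym
    rcases hallS y hym with h | h | h
    · rw [h, G.dist_self'] at hye; exact absurd hye (by norm_num)
    · rw [h, G.dist_self'] at hyf; exact absurd hyf (by norm_num)
    · rw [h, G.dist_adj (G.adj_of_line hLs hsLs hfLs hsf)] at hyf
      exact absurd hyf (by norm_num)
  have hzLs : z ∉ Ls := by
    intro hzm
    rcases hallS z hzm with h | h | h
    · rw [h, G.dist_self'] at hze; exact absurd hze (by norm_num)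
    · rw [h, G.dist_self'] at hzf; exact absurd hzf (by norm_num)
    · rw [h, G.dist_adj (G.adj_of_line hLs hsLs heLs hse)] at hze
      exact absurd hze (by norm_num)
  have hys : G.dist y s = 2 :=
    dist_two_of_third hreach hnear hy hLs hyLs heLs hsLs hse.symm hye
  have hzs : G.dist z s = 2 :=
    dist_two_of_third hreach hnear hz hLs hzLs hfLs hsLs hsf.symm hzf
  refine ⟨s, hs_pts, hys, hzs, ?_, ?_⟩
  · -- common neighbours of y and z away from a,b are adjacent to s
    intro k hky hkz hka hkb
    have hk_pts : k ∈ G.pts := (G.pts_of_adj hky).1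
    have hky1 : G.dist k y = 1 := G.dist_adj hky
    have hkz1 : G.dist k z = 1 := G.dist_adj hkz
    have hkLa : k ∉ La := by
      intro hkm
      rcases hallA k hkm with h | h | h
      · rw [h, G.dist_self'] at hka; exact absurd hka (by norm_num)
      · exact hky.ne h
      · rw [h, G.dist_adj (G.adj_of_line hLa heLa haLa hea)] at hka
        exact absurd hka (by norm_num)
    have hke : G.dist k e = 2 :=
      dist_two_of_third hreach hnear hk_pts hLa hkLa hyLa heLa hey.symm hky1
    have hkLb : k ∉ Lb := by
      intro hkm
      rcases hallB k hkm with h | h | h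
      · rw [h, G.dist_self'] at hkb; exact absurd hkb (by norm_num)
      · exact hkz.ne h
      · rw [h, G.dist_adj (G.adj_of_line hLb hfLb hbLb hfb)] at hkb
        exact absurd hkb (by norm_num)
    have hkf : G.dist k f = 2 :=
      dist_two_of_third hreach hnear hk_pts hLb hkLb hzLb hfLb hfz.symm hkz1
    have hkLs : k ∉ Ls := by
      intro hkm
      rcases hallS k hkm with h | h | h
      · rw [h, G.dist_self'] at hke; exact absurd hke (by norm_num)
      · rw [h, G.dist_self'] at hkf; exact absurd hkf (by norm_num)
      · rw [h, G.dist_adj (G.adj_of_line hLs hsLs heLs hse)] at hke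
        exact absurd hke (by norm_num)
    exact dist_one_of_two_two hreach hnear hk_pts hLs hkLs heLs hfLs hsLs hef_ne hallS
      hke hkf
  · -- points at distance 2 from y,z adjacent to a and b are adjacent to s
    intro k hk_pts hky2 hkz2 hka1 hkb1
    have hkLa : k ∉ La := by
      intro hkm
      rcases hallA k hkm with h | h | h
      · rw [h, G.dist_self'] at hka1; exact absurd hka1 (by norm_num)
      · rw [h, G.dist_self'] at hky2; exact absurd hky2 (by norm_num)
      · rw [h, G.dist_adj (G.adj_of_line hLa heLa hyLa hey)] at hky2
        exact absurd hky2 (by norm_num)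
    have hke : G.dist k e = 2 :=
      dist_two_of_third hreach hnear hk_pts hLa hkLa haLa heLa hea.symm hka1
    have hkLb : k ∉ Lb := by
      intro hkm
      rcases hallB k hkm with h | h | h
      · rw [h, G.dist_self'] at hkb1; exact absurd hkb1 (by norm_num)
      · rw [h, G.dist_self'] at hkz2; exact absurd hkz2 (by norm_num)
      · rw [h, G.dist_adj (G.adj_of_line hLb hfLb hzLb hfz)] at hkz2
        exact absurd hkz2 (by norm_num)
    have hkf : G.dist k f = 2 :=
      dist_two_of_third hreach hnear hk_pts hLb hkLb hbLb hfLb hfb.symm hkb1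
    have hkLs : k ∉ Ls := by
      intro hkm
      rcases hallS k hkm with h | h | h
      · rw [h, G.dist_self'] at hke; exact absurd hke (by norm_num)
      · rw [h, G.dist_self'] at hkf; exact absurd hkf (by norm_num)
      · rw [h, G.dist_adj (G.adj_of_line hLs hsLs heLs hse)] at hke
        exact absurd hke (by norm_num)
    exact dist_one_of_two_two hreach hnear hk_pts hLs hkLs heLs hfLs hsLs hef_ne hallS
      hke hkf

/-- Two points at distance 2 have finitely many common neighbours. -/
lemma pair_bound
    (hreach : ∀ x ∈ G.pts, ∀ y ∈ G.pts, G.graph.Reachable x y)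
    (hnear : ∀ x ∈ G.pts, ∀ L ∈ G.lines, ∃! y, y ∈ L ∧ ∀ z ∈ L, G.dist x y ≤ G.dist x z)
    (h3 : ∀ L ∈ G.lines, L.ncard = 3)
    {y z : P'} (hy : y ∈ G.pts) (hz : z ∈ G.pts) (hd : G.dist y z = 2) :
    {x | G.graph.Adj x y ∧ G.graph.Adj x z}.Finite := by
  by_contra hinf
  have hinf' : {x | G.graph.Adj x y ∧ G.graph.Adj x z}.Infinite := hinf
  set F := hinf'.natEmbedding with hF
  set c : ℕ → P' := fun i => (F i : P') with hc
  have hc_inj : ∀ i j : ℕ, c i = c j → i = j := fun i j h =>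
    F.injective (Subtype.coe_injective h)
  have hcy : ∀ i, G.graph.Adj (c i) y := fun i => (F i).2.1
  have hcz : ∀ i, G.graph.Adj (c i) z := fun i => (F i).2.2
  have hcpts : ∀ i, c i ∈ G.pts := fun i => (G.pts_of_adj (hcy i)).1
  have hyz_ne : y ≠ z := by
    intro h; rw [h, G.dist_self'] at hd; exact absurd hd (by norm_num)
  have hcc : ∀ i j : ℕ, i ≠ j → G.dist (c i) (c j) = 2 := by
    intro i j hij
    have hne : c i ≠ c j := fun h => hij (hc_inj _ _ h)
    have hub : G.dist (c i) (c j) ≤ 2 := by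
      have h1 : G.dist (c i) y = 1 := G.dist_adj (hcy i)
      have := dist_le_adj hreach (hcpts i) hy (hcy j).symm
      rw [h1] at this; exact this
    have hnadj : ¬ G.graph.Adj (c i) (c j) := by
      intro hadj
      obtain ⟨hne', L, hL, hiL, hjL⟩ := hadj
      have hyL : y ∈ L := mem_line_of_two_dist_one hreach hnear hy hL hiL hjL hne'
        (G.dist_adj (hcy i).symm) (G.dist_adj (hcy j).symm)
      have hzL : z ∈ L := mem_line_of_two_dist_one hreach hnear hz hL hiL hjL hne'
        (G.dist_adj (hcz i).symm) (G.dist_adj (hcz j).symm)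
      obtain ⟨t, htL, ht1, ht2, hallL⟩ := G.third_point h3 hL hiL hjL hne'
      have hy' : y = t := by
        rcases hallL y hyL with h | h | h
        · exact absurd h.symm (hcy i).ne
        · exact absurd h.symm (hcy j).ne
        · exact h
      have hz' : z = t := by
        rcases hallL z hzL with h | h | h
        · exact absurd h.symm (hcz i).ne
        · exact absurd h.symm (hcz j).ne
        · exact h
      exact hyz_ne (hy'.trans hz'.symm)
    have hpos : 0 < G.dist (c i) (c j) := (hreach _ (hcpts i) _ (hcpts j)).pos_dist_of_ne hne
    have hne1 : G.dist (c i) (c j) ≠ 1 := fun h => hnadj (G.adj_of_dist_one h)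
    omega
  obtain ⟨s, hs_pts, hys, hzs, hs1, hs2⟩ :=
    scons hreach hnear h3 hy hz hd (hcy 0) (hcz 0) (hcy 1) (hcz 1)
      (hcc 0 1 (by norm_num))
  obtain ⟨s', hs'_pts, hys', hzs', hs'1, hs'2⟩ :=
    scons hreach hnear h3 hy hz hd (hcy 2) (hcz 2) (hcy 3) (hcz 3)
      (hcc 2 3 (by norm_num))
  have h2s : G.dist (c 2) s = 1 :=
    hs1 _ (hcy 2) (hcz 2) (hcc 2 0 (by norm_num)) (hcc 2 1 (by norm_num))
  have h3s : G.dist (c 3) s = 1 :=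
    hs1 _ (hcy 3) (hcz 3) (hcc 3 0 (by norm_num)) (hcc 3 1 (by norm_num))
  have h4 : G.dist (c 4) s = 1 :=
    hs1 _ (hcy 4) (hcz 4) (hcc 4 0 (by norm_num)) (hcc 4 1 (by norm_num))
  have h5 : G.dist (c 5) s = 1 :=
    hs1 _ (hcy 5) (hcz 5) (hcc 5 0 (by norm_num)) (hcc 5 1 (by norm_num))
  have h4' : G.dist (c 4) s' = 1 :=
    hs'1 _ (hcy 4) (hcz 4) (hcc 4 2 (by norm_num)) (hcc 4 3 (by norm_num))
  have h5' : G.dist (c 5) s' = 1 :=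
    hs'1 _ (hcy 5) (hcz 5) (hcc 5 2 (by norm_num)) (hcc 5 3 (by norm_num))
  have hss' : G.dist s s' = 1 := by
    refine hs'2 s hs_pts ?_ ?_ ?_ ?_
    · rw [G.dist_comm']; exact hys
    · rw [G.dist_comm']; exact hzs
    · rw [G.dist_comm']; exact h2s
    · rw [G.dist_comm']; exact h3s
  obtain ⟨hss'_ne, M, hM, hsM, hs'M⟩ := G.adj_of_dist_one hss'
  obtain ⟨g, hgM, hgs, hgs', hallM⟩ := G.third_point h3 hM hsM hs'M hss'_ne
  have h4M : c 4 ∈ M :=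
    mem_line_of_two_dist_one hreach hnear (hcpts 4) hM hsM hs'M hss'_ne h4 h4'
  have h5M : c 5 ∈ M :=
    mem_line_of_two_dist_one hreach hnear (hcpts 5) hM hsM hs'M hss'_ne h5 h5'
  have e4 : c 4 = g := by
    rcases hallM _ h4M with h | h | h
    · rw [h, G.dist_self'] at h4; exact absurd h4 (by norm_num)
    · rw [h, G.dist_self'] at h4'; exact absurd h4' (by norm_num)
    · exact h
  have e5 : c 5 = g := by
    rcases hallM _ h5M with h | h | h
    · rw [h, G.dist_self'] at h5; exact absurd h5 (by norm_num)
    · rw [h, G.dist_self'] at h5'; exact absurd h5' (by norm_num)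
    · exact h
  exact absurd (hc_inj 4 5 (e4.trans e5.symm)) (by norm_num)

/-- A near hexagon of order `(2,2)` has finitely many points. -/
lemma pts_finite_of_order22 {H : Geom P'} (hnp : H.IsNearPolygon 3)
    (hord : H.HasOrder 2 2) : H.pts.Finite := by
  obtain ⟨hreach, hdle, ⟨x0, hx0, -⟩, -⟩ := hnp
  have nbr_fin : ∀ u ∈ H.pts, {v | H.graph.Adj u v}.Finite := by
    intro u hu
    have hlines : {L | L ∈ H.lines ∧ u ∈ L}.Finite :=
      Set.finite_of_ncard_ne_zero (by rw [hord.2 u hu]; norm_num)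
    have hsub : {v | H.graph.Adj u v} ⊆ ⋃ L ∈ {L | L ∈ H.lines ∧ u ∈ L}, L := by
      rintro v ⟨hne, L, hL, huL, hvL⟩
      exact Set.mem_biUnion ⟨hL, huL⟩ hvL
    exact ((hlines.biUnion (fun L hL => H.line_finite
      (fun L' hL' => hord.1 L' hL') hL.1))).subset hsub
  have Rfin : ∀ k : ℕ, {v | ∃ p : H.graph.Walk v x0, p.length ≤ k}.Finite := by
    intro k
    induction k with
    | zero =>
      apply Set.Finite.subset (Set.finite_singleton x0)
      rintro v ⟨p, hp⟩
      have h0 : p.length = 0 := Nat.le_zero.mp hp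
      simp [SimpleGraph.Walk.eq_of_length_eq_zero h0]
    | succ k ih =>
      have hfin2 : (⋃ u ∈ ({v | ∃ p : H.graph.Walk v x0, p.length ≤ k} ∩ H.pts),
          {v | H.graph.Adj u v}).Finite :=
        Set.Finite.biUnion (ih.inter_of_left _) (fun u hu => nbr_fin u hu.2)
      apply Set.Finite.subset (ih.union hfin2)
      rintro v ⟨p, hp⟩
      cases p with
      | nil => exact Or.inl ⟨SimpleGraph.Walk.nil, by simp⟩
      | @cons _ u _ h q =>
        right
        have hq : q.length ≤ k := by
          rw [SimpleGraph.Walk.length_cons] at hp; omega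
        have hu_pts : u ∈ H.pts := (H.pts_of_adj h).2
        exact Set.mem_biUnion (⟨⟨q, hq⟩, hu_pts⟩ :
          u ∈ {v | ∃ p : H.graph.Walk v x0, p.length ≤ k} ∩ H.pts) h.symm
  apply (Rfin 3).subset
  intro v hv
  obtain ⟨p, hp⟩ := (hreach v hv x0 hx0).exists_walk_length_eq_dist
  exact ⟨p, by rw [hp]; exact hdle v hv x0 hx0⟩

end Core

theorem statement_10 {P : Type*} (N H : Geom P)
    (hN : N.IsNearPolygon 3)
    (h3 : ∀ L ∈ N.lines, L.ncard = 3)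
    (hsub : H.IsSubgeom N) (hiso : H.IsIsometric N)
    (hH : H.IsGenHexagon) (hord : H.HasOrder 2 2) :
    {x | x ∈ N.pts ∧ x ∉ H.pts ∧ ∃ y ∈ H.pts, ∃ z ∈ H.pts,
      y ≠ z ∧ N.graph.Adj x y ∧ N.graph.Adj x z}.Finite := by
  obtain ⟨hreach, hdle, hex, hnear⟩ := hN
  have hHfin : H.pts.Finite := pts_finite_of_order22 hH.1 hord
  have hTfin : ∀ y ∈ H.pts, ∀ z ∈ H.pts,
      {x | y ≠ z ∧ N.graph.Adj x y ∧ N.graph.Adj x z}.Finite := by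
    intro y hy z hz
    by_cases hyz : y = z
    · apply Set.Finite.subset Set.finite_empty
      intro x hx
      exact absurd hyz hx.1
    · have hyN : y ∈ N.pts := hsub.1 hy
      have hzN : z ∈ N.pts := hsub.1 hz
      by_cases hadj : N.graph.Adj y z
      · obtain ⟨-, L, hL, hyL, hzL⟩ := hadj
        apply (N.line_finite h3 hL).subset
        intro x hx
        exact mem_line_of_two_dist_one hreach hnear (N.pts_of_adj hx.2.1).1 hL hyL hzL hyz
          (N.dist_adj hx.2.1) (N.dist_adj hx.2.2)
      · by_cases hd2 : N.dist y z = 2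
        · apply (pair_bound hreach hnear h3 hyN hzN hd2).subset
          intro x hx
          exact hx.2
        · apply Set.Finite.subset Set.finite_empty
          rintro x ⟨-, hxy, hxz⟩
          have hxN : x ∈ N.pts := (N.pts_of_adj hxy).1
          have hub : N.dist y z ≤ 2 := by
            have h1 : N.dist y x = 1 := N.dist_adj hxy.symm
            have := dist_le_adj hreach hyN hxN hxz
            rw [h1] at this; exact this
          have hpos : 0 < N.dist y z := (hreach y hyN z hzN).pos_dist_of_ne hyz
          have hne1 : N.dist y z ≠ 1 := fun h => hadj (N.adj_of_dist_one h)
          omega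
  apply Set.Finite.subset (hHfin.biUnion (fun y hy => hHfin.biUnion (fun z hz =>
    hTfin y hy z hz)))
  rintro x ⟨-, -, y, hy, z, hz, hne, hxy, hxz⟩
  exact Set.mem_biUnion hy (Set.mem_biUnion hz ⟨hne, hxy, hxz⟩)
end

section
/- Let S be a finite near hexagon of order (s,t) having v points. Then v ≤ (s+1)(s²t² + st + 1), and equality holds if and only if S is a generalized hexagon. -/
variable {P : Type*}

section Aux
variable {P : Type*} {S : Geom P}

lemma Geom.adj_mem_left {a b : P} (h : S.graph.Adj a b) : a ∈ S.pts := by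
  obtain ⟨-, L, hL, ha, -⟩ := h; exact S.lines_pts L hL ha

lemma Geom.adj_mem_right {a b : P} (h : S.graph.Adj a b) : b ∈ S.pts :=
  Geom.adj_mem_left h.symm

lemma Geom.adj_of_line_s15 {L : Set P} (hL : L ∈ S.lines) {a b : P} (ha : a ∈ L) (hb : b ∈ L)
    (hab : a ≠ b) : S.graph.Adj a b := ⟨hab, L, hL, ha, hb⟩

lemma Geom.dist_triangle_adj {x a b : P} (hr : S.graph.Reachable x a) (h : S.graph.Adj a b) :
    S.dist x b ≤ S.dist x a + 1 := by
  obtain ⟨p, hp⟩ := hr.exists_walk_length_eq_dist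
  have h2 := SimpleGraph.dist_le (p.concat h)
  simpa [SimpleGraph.Walk.length_concat, hp, Geom.dist] using h2

lemma Geom.exists_penultimate {x y : P} (hr : S.graph.Reachable x y) {n : ℕ}
    (h : S.dist x y = n + 1) : ∃ z, S.graph.Adj z y ∧ S.dist x z = n := by
  obtain ⟨p, hp⟩ := hr.exists_walk_length_eq_dist
  have hq : (p.reverse).length = n + 1 := by
    rw [SimpleGraph.Walk.length_reverse]; exact hp.trans h
  cases hpr : p.reverse with
  | nil => rw [hpr] at hq; simp at hq
  | cons hadj q =>
    rename_i z
    rw [hpr] at hq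
    simp only [SimpleGraph.Walk.length_cons, Nat.add_right_cancel_iff] at hq
    refine ⟨z, hadj.symm, ?_⟩
    have h1 : S.dist x z ≤ n := by
      have := SimpleGraph.dist_le q.reverse
      simpa [hq, Geom.dist] using this
    have h2 : S.dist x y ≤ S.dist x z + 1 :=
      Geom.dist_triangle_adj (q.reverse.reachable) hadj.symm
    omega

lemma ncard_biUnion_const {α β : Type*} {I : Set α} (hI : I.Finite) (f : α → Set β) (k : ℕ) :
    (∀ i ∈ I, (f i).ncard = k) → (∀ i ∈ I, (f i).Finite) →
    (∀ i ∈ I, ∀ j ∈ I, i ≠ j → Disjoint (f i) (f j)) →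
    (⋃ i ∈ I, f i).ncard = I.ncard * k := by
  refine Set.Finite.induction_on (motive := fun I _ => (∀ i ∈ I, (f i).ncard = k) →
      (∀ i ∈ I, (f i).Finite) → (∀ i ∈ I, ∀ j ∈ I, i ≠ j → Disjoint (f i) (f j)) →
      (⋃ i ∈ I, f i).ncard = I.ncard * k) I hI (by intro _ _ _; simp) ?_
  intro a s ha hs ih
  intro hcard hfin hdisj
  rw [Set.biUnion_insert]
  have hsub : ∀ i ∈ s, i ∈ insert a s := fun i hi => Set.mem_insert_of_mem a hi
  have hdis : Disjoint (f a) (⋃ i ∈ s, f i) := by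
    rw [Set.disjoint_left]
    rintro b hb hb2
    simp only [Set.mem_iUnion] at hb2
    obtain ⟨i, hi, hbi⟩ := hb2
    exact (Set.disjoint_left.mp (hdisj a (Set.mem_insert a s) i (hsub i hi)
      (fun he => ha (he ▸ hi)))) hb hbi
  rw [Set.ncard_union_eq hdis (hfin a (Set.mem_insert a s))
    (hs.biUnion (fun i hi => hfin i (hsub i hi))),
    ih (fun i hi => hcard i (hsub i hi)) (fun i hi => hfin i (hsub i hi))
      (fun i hi j hj hij => hdisj i (hsub i hi) j (hsub j hj) hij),
    hcard a (Set.mem_insert a s), Set.ncard_insert_of_notMem ha hs]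
  ring

end Aux
section Main
variable {P : Type*}

/-- Lines through `z` whose chosen nearest point (w.r.t. the base point) is `z`. -/
def GeomB (S : Geom P) (m : Set P → P) (z : P) : Set (Set P) :=
  {L | L ∈ S.lines ∧ z ∈ L ∧ m L = z}

/-- Lines through `z` whose chosen nearest point is not `z`. -/
def GeomA (S : Geom P) (m : Set P → P) (z : P) : Set (Set P) :=
  {L | L ∈ S.lines ∧ z ∈ L ∧ m L ≠ z}

/-- `m` picks, on each line, the unique nearest point to `x`, and all other points of
the line are one further away. -/
lemma Geom.dist_self'' (S : Geom P) (x : P) : S.dist x x = 0 := SimpleGraph.dist_self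

def mOK (S : Geom P) (x : P) (m : Set P → P) : Prop :=
  ∀ L ∈ S.lines, m L ∈ L ∧ ∀ z ∈ L, z ≠ m L → S.dist x z = S.dist x (m L) + 1

lemma linesThru_finite (S : Geom P) (hfin : S.pts.Finite) (z : P) :
    {L | L ∈ S.lines ∧ z ∈ L}.Finite :=
  hfin.finite_subsets.subset (fun L hL => S.lines_pts L hL.1)

lemma GeomA_finite (S : Geom P) (hfin : S.pts.Finite) (m : Set P → P) (z : P) :
    (GeomA S m z).Finite :=
  (linesThru_finite S hfin z).subset (fun L hL => ⟨hL.1, hL.2.1⟩)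

lemma GeomB_finite (S : Geom P) (hfin : S.pts.Finite) (m : Set P → P) (z : P) :
    (GeomB S m z).Finite :=
  (linesThru_finite S hfin z).subset (fun L hL => ⟨hL.1, hL.2.1⟩)

lemma L_AB (S : Geom P) {s t : ℕ} (hfin : S.pts.Finite) (hord : S.HasOrder s t)
    (m : Set P → P) {z : P} (hz : z ∈ S.pts) :
    (GeomA S m z).ncard + (GeomB S m z).ncard = t + 1 := by
  have hu : GeomA S m z ∪ GeomB S m z = {L | L ∈ S.lines ∧ z ∈ L} := by
    ext L
    simp only [GeomA, GeomB, Set.mem_union, Set.mem_setOf_eq]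
    tauto
  have hd : Disjoint (GeomA S m z) (GeomB S m z) := by
    rw [Set.disjoint_left]
    rintro L ⟨-, -, h1⟩ ⟨-, -, h2⟩
    exact h1 h2
  rw [← Set.ncard_union_eq hd (GeomA_finite S hfin m z) (GeomB_finite S hfin m z), hu,
    hord.2 z hz]

lemma L_up (S : Geom P) {s t : ℕ} (hfin : S.pts.Finite) (hord : S.HasOrder s t)
    {x : P} {m : Set P → P} (hm : mOK S x m) (z : P) :
    {y | S.graph.Adj z y ∧ S.dist x y = S.dist x z + 1}.ncard = (GeomB S m z).ncard * s := by
  have hset : {y | S.graph.Adj z y ∧ S.dist x y = S.dist x z + 1} =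
      ⋃ L ∈ GeomB S m z, (L \ {z}) := by
    ext y
    simp only [Set.mem_setOf_eq, Set.mem_iUnion, Set.mem_diff, Set.mem_singleton_iff,
      exists_prop]
    constructor
    · rintro ⟨hadj, hdy⟩
      obtain ⟨hne, L, hL, hzL, hyL⟩ := hadj
      refine ⟨L, ⟨hL, hzL, ?_⟩, hyL, Ne.symm hne⟩
      obtain ⟨hmL, hdich⟩ := hm L hL
      by_contra hmz
      have h1 : S.dist x z = S.dist x (m L) + 1 :=
        hdich z hzL (fun h => hmz h.symm)
      rcases eq_or_ne y (m L) with he | hne2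
      · rw [he] at hdy; omega
      · have h2 := hdich y hyL hne2; omega
    · rintro ⟨L, ⟨hL, hzL, hmz⟩, hyL, hyz⟩
      obtain ⟨hmL, hdich⟩ := hm L hL
      refine ⟨Geom.adj_of_line_s15 hL hzL hyL (Ne.symm hyz), ?_⟩
      have := hdich y hyL (by rw [hmz]; exact hyz)
      rw [this, hmz]
  rw [hset]
  refine ncard_biUnion_const (GeomB_finite S hfin m z) _ s ?_ ?_ ?_
  · rintro L ⟨hL, hzL, -⟩
    have hLfin : L.Finite := hfin.subset (S.lines_pts L hL)
    rw [Set.ncard_diff_singleton_of_mem hzL, hord.1 L hL]; omega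
  · rintro L ⟨hL, -, -⟩
    exact (hfin.subset (S.lines_pts L hL)).diff
  · rintro L ⟨hL, hzL, -⟩ L' ⟨hL', hzL', -⟩ hne
    rw [Set.disjoint_left]
    rintro w ⟨hwL, hwz⟩ ⟨hwL', -⟩
    exact hne (S.unique_line L hL L' hL' z w (fun h => hwz h.symm) hzL hwL hzL' hwL')

lemma L_down (S : Geom P) {x : P} {m : Set P → P} (hm : mOK S x m) (z : P) :
    {w | S.graph.Adj z w ∧ S.dist x w + 1 = S.dist x z}.ncard = (GeomA S m z).ncard := by
  have hset : {w | S.graph.Adj z w ∧ S.dist x w + 1 = S.dist x z} = m '' (GeomA S m z) := by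
    ext w
    simp only [Set.mem_setOf_eq, Set.mem_image]
    constructor
    · rintro ⟨hadj, hdw⟩
      obtain ⟨hne, L, hL, hzL, hwL⟩ := hadj
      obtain ⟨hmL, hdich⟩ := hm L hL
      have hmzne : m L ≠ z := by
        intro h
        have := hdich w hwL (by rw [h]; exact Ne.symm hne)
        rw [h] at this; omega
      have hw : w = m L := by
        by_contra hwm
        have h1 := hdich w hwL hwm
        have h2 := hdich z hzL (fun h => hmzne h.symm)
        omega
      exact ⟨L, ⟨hL, hzL, hmzne⟩, hw.symm⟩
    · rintro ⟨L, ⟨hL, hzL, hmzne⟩, rfl⟩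
      obtain ⟨hmL, hdich⟩ := hm L hL
      have h2 := hdich z hzL (fun h => hmzne h.symm)
      exact ⟨Geom.adj_of_line_s15 hL hzL hmL (fun h => hmzne h.symm), by omega⟩
  rw [hset]
  refine Set.ncard_image_of_injOn ?_
  rintro L ⟨hL, hzL, hmzne⟩ L' ⟨hL', hzL', hmzne'⟩ heq
  have hmL : m L ∈ L := (hm L hL).1
  have hmL' : m L' ∈ L' := (hm L' hL').1
  exact S.unique_line L hL L' hL' z (m L) (fun h => hmzne h.symm) hzL hmL hzL'
    (heq ▸ hmL')

lemma L_Ax (S : Geom P) {x : P} {m : Set P → P} (hm : mOK S x m) :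
    GeomA S m x = ∅ := by
  ext L
  simp only [GeomA, Set.mem_setOf_eq, Set.mem_empty_iff_false, iff_false, not_and]
  rintro hL hxL hmx
  obtain ⟨hmL, hdich⟩ := hm L hL
  have := hdich x hxL (fun h => hmx h.symm)
  rw [Geom.dist_self''] at this
  omega

lemma L_A1 (S : Geom P) (hS : S.IsNearPolygon 3) {x : P} (hx : x ∈ S.pts)
    {m : Set P → P} (hm : mOK S x m) {z : P} (hz : S.dist x z = 1) :
    (GeomA S m z).ncard = 1 := by
  have hadj : S.graph.Adj x z := SimpleGraph.dist_eq_one_iff_adj.mp hz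
  obtain ⟨hxz, L₀, hL₀, hxL₀, hzL₀⟩ := hadj
  rw [Set.ncard_eq_one]
  refine ⟨L₀, ?_⟩
  have hmem : L₀ ∈ GeomA S m z := by
    obtain ⟨hmL, hdich⟩ := hm L₀ hL₀
    have hmx : m L₀ = x := by
      by_contra h
      have := hdich x hxL₀ (fun h' => h h'.symm)
      rw [Geom.dist_self''] at this
      omega
    exact ⟨hL₀, hzL₀, by rw [hmx]; exact hxz⟩
  ext L
  simp only [Set.mem_singleton_iff]
  constructor
  · rintro ⟨hL, hzL, hmzne⟩
    obtain ⟨hmL, hdich⟩ := hm L hL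
    have h1 := hdich z hzL (fun h => hmzne h.symm)
    have h0 : S.dist x (m L) = 0 := by omega
    have hmx : m L = x := by
      have hr : S.graph.Reachable x (m L) := hS.1 x hx (m L) (S.lines_pts L hL hmL)
      exact (hr.dist_eq_zero_iff.mp h0).symm
    exact S.unique_line L hL L₀ hL₀ x z hxz (hmx ▸ hmL) hzL hxL₀ hzL₀
  · rintro rfl
    exact hmem

lemma L_B3 (S : Geom P) (hS : S.IsNearPolygon 3) {x : P} (hx : x ∈ S.pts)
    {m : Set P → P} (hm : mOK S x m) {u : P} (hu : S.dist x u = 3) :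
    GeomB S m u = ∅ := by
  ext L
  simp only [GeomB, Set.mem_setOf_eq, Set.mem_empty_iff_false, iff_false, not_and]
  rintro hL huL hmu
  obtain ⟨a, ha, b, hb, hab⟩ := S.two_pts L hL
  obtain ⟨hmL, hdich⟩ := hm L hL
  have hw : ∃ w ∈ L, w ≠ u := by
    rcases eq_or_ne a u with rfl | h
    · exact ⟨b, hb, fun h => hab h.symm⟩
    · exact ⟨a, ha, h⟩
  obtain ⟨w, hwL, hwu⟩ := hw
  have := hdich w hwL (by rw [hmu]; exact hwu)
  rw [hmu] at this
  have hd := hS.2.1 x hx w (S.lines_pts L hL hwL)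
  omega

end Main
section Worker
variable {P : Type*}

lemma key_count (S : Geom P) (s t : ℕ) (hS : S.IsNearPolygon 3) (hfin : S.pts.Finite)
    (hord : S.HasOrder s t) {x : P} (hx : x ∈ S.pts) :
    S.pts.ncard + s ^ 3 * t = 1 + s + s * t + (s + 1) * {y | y ∈ S.pts ∧ S.dist x y = 2}.ncard ∧
    {y | y ∈ S.pts ∧ S.dist x y = 2}.ncard ≤ s ^ 2 * t * (t + 1) ∧
    ({y | y ∈ S.pts ∧ S.dist x y = 2}.ncard = s ^ 2 * t * (t + 1) ↔
      ∀ y ∈ S.pts, S.dist x y = 2 → ∃! z, S.graph.Adj x z ∧ S.graph.Adj z y) := by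
  classical
  -- construct the nearest-point function on lines
  have hm0 : ∀ L : Set P, ∃ mp : P, L ∈ S.lines →
      mp ∈ L ∧ ∀ z ∈ L, z ≠ mp → S.dist x z = S.dist x mp + 1 := by
    intro L
    by_cases hL : L ∈ S.lines
    · obtain ⟨mp, ⟨hmL, hmmin⟩, huniq⟩ := hS.2.2.2 x hx L hL
      refine ⟨mp, fun _ => ⟨hmL, fun z hz hzm => ?_⟩⟩
      have h1 : S.dist x mp ≤ S.dist x z := hmmin z hz
      have h2 : S.dist x z ≤ S.dist x mp + 1 :=
        Geom.dist_triangle_adj (hS.1 x hx mp (S.lines_pts L hL hmL))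
          (Geom.adj_of_line_s15 hL hmL hz (fun h => hzm h.symm))
      have h3 : S.dist x z ≠ S.dist x mp := fun he =>
        hzm (huniq z ⟨hz, fun w hw => he ▸ hmmin w hw⟩)
      omega
    · exact ⟨x, fun h => absurd h hL⟩
  choose m hm0 using hm0
  have hm : mOK S x m := fun L hL => hm0 L hL
  set V : Finset P := hfin.toFinset with hVdef
  have hmemV : ∀ z : P, z ∈ V ↔ z ∈ S.pts := fun z => hfin.mem_toFinset
  set G1 : Finset P := V.filter (fun z => S.dist x z = 1) with hG1
  set G2 : Finset P := V.filter (fun z => S.dist x z = 2) with hG2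
  set G3 : Finset P := V.filter (fun z => S.dist x z = 3) with hG3
  have hAB : ∀ z ∈ S.pts, (GeomA S m z).ncard + (GeomB S m z).ncard = t + 1 :=
    fun z hz => L_AB S hfin hord m hz
  -- the number of neighbours of `x`
  have hG1card : G1.card = (t + 1) * s := by
    have h1 : (G1 : Set P) = {y | S.graph.Adj x y ∧ S.dist x y = S.dist x x + 1} := by
      ext y
      simp only [hG1, Finset.mem_coe, Finset.mem_filter, Set.mem_setOf_eq, hmemV, Geom.dist_self'']
      constructor
      · rintro ⟨h1, h2⟩
        exact ⟨SimpleGraph.dist_eq_one_iff_adj.mp h2, h2⟩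
      · rintro ⟨h1, h2⟩
        exact ⟨Geom.adj_mem_right h1, h2⟩
    have h2 : (GeomB S m x).ncard = t + 1 := by
      have := hAB x hx
      rw [L_Ax S hm] at this
      simpa using this
    calc G1.card = ((G1 : Set P)).ncard := (Set.ncard_coe_finset G1).symm
      _ = (GeomB S m x).ncard * s := by rw [h1]; exact L_up S hfin hord hm x
      _ = (t + 1) * s := by rw [h2]
  -- neighbours of a point at distance 1, at distance 2 from x
  have hc2 : ∀ z ∈ G1, (G2.filter (fun y => S.graph.Adj z y)).card = t * s := by
    intro z hz
    obtain ⟨hzV, hzd⟩ := Finset.mem_filter.mp hz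
    have hzp : z ∈ S.pts := (hmemV z).mp hzV
    have hb : ((G2.filter (fun y => S.graph.Adj z y)) : Set P)
        = {y | S.graph.Adj z y ∧ S.dist x y = S.dist x z + 1} := by
      ext y
      simp only [hG2, Finset.mem_coe, Finset.mem_filter, Set.mem_setOf_eq, hmemV, hzd]
      constructor
      · rintro ⟨⟨h1, h2⟩, h3⟩
        exact ⟨h3, h2⟩
      · rintro ⟨h1, h2⟩
        exact ⟨⟨Geom.adj_mem_right h1, h2⟩, h1⟩
    have hA1 : (GeomA S m z).ncard = 1 := L_A1 S hS hx hm hzd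
    have hBt : (GeomB S m z).ncard = t := by
      have := hAB z hzp; omega
    calc (G2.filter (fun y => S.graph.Adj z y)).card
        = {y | S.graph.Adj z y ∧ S.dist x y = S.dist x z + 1}.ncard := by
          rw [← hb, Set.ncard_coe_finset]
      _ = (GeomB S m z).ncard * s := L_up S hfin hord hm z
      _ = t * s := by rw [hBt]
  -- down- and up-degrees of a point at distance 2
  have hc3a : ∀ y ∈ G2, (G1.filter (fun z => S.graph.Adj z y)).card = (GeomA S m y).ncard := by
    intro y hy
    obtain ⟨hyV, hyd⟩ := Finset.mem_filter.mp hy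
    have hb : ((G1.filter (fun z => S.graph.Adj z y)) : Set P)
        = {w | S.graph.Adj y w ∧ S.dist x w + 1 = S.dist x y} := by
      ext z
      simp only [hG1, Finset.mem_coe, Finset.mem_filter, Set.mem_setOf_eq, hmemV, hyd]
      constructor
      · rintro ⟨⟨h1, h2⟩, h3⟩
        exact ⟨h3.symm, by omega⟩
      · rintro ⟨h1, h2⟩
        exact ⟨⟨Geom.adj_mem_right h1, by omega⟩, h1.symm⟩
    rw [← Set.ncard_coe_finset, hb]
    exact L_down S hm y
  have hc3b : ∀ y ∈ G2, (G3.filter (fun w => S.graph.Adj y w)).card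
      = (GeomB S m y).ncard * s := by
    intro y hy
    obtain ⟨hyV, hyd⟩ := Finset.mem_filter.mp hy
    have hb : ((G3.filter (fun w => S.graph.Adj y w)) : Set P)
        = {w | S.graph.Adj y w ∧ S.dist x w = S.dist x y + 1} := by
      ext w
      simp only [hG3, Finset.mem_coe, Finset.mem_filter, Set.mem_setOf_eq, hmemV, hyd]
      constructor
      · rintro ⟨⟨h1, h2⟩, h3⟩
        exact ⟨h3, by omega⟩
      · rintro ⟨h1, h2⟩
        exact ⟨⟨Geom.adj_mem_right h1, by omega⟩, h1⟩
    rw [← Set.ncard_coe_finset, hb]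
    exact L_up S hfin hord hm y
  have hc1pos : ∀ y ∈ G2, 1 ≤ (G1.filter (fun z => S.graph.Adj z y)).card := by
    intro y hy
    obtain ⟨hyV, hyd⟩ := Finset.mem_filter.mp hy
    have hyp : y ∈ S.pts := (hmemV y).mp hyV
    obtain ⟨z, hadj, hdz⟩ := Geom.exists_penultimate (hS.1 x hx y hyp) hyd
    refine Finset.card_pos.mpr ⟨z, Finset.mem_filter.mpr ⟨Finset.mem_filter.mpr
      ⟨(hmemV z).mpr (Geom.adj_mem_left hadj), hdz⟩, hadj⟩⟩
  -- degree of a point at distance 3 towards distance 2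
  have hc4 : ∀ u ∈ G3, (G2.filter (fun w => S.graph.Adj w u)).card = t + 1 := by
    intro u hu
    obtain ⟨huV, hud⟩ := Finset.mem_filter.mp hu
    have hup : u ∈ S.pts := (hmemV u).mp huV
    have hb : ((G2.filter (fun w => S.graph.Adj w u)) : Set P)
        = {w | S.graph.Adj u w ∧ S.dist x w + 1 = S.dist x u} := by
      ext w
      simp only [hG2, Finset.mem_coe, Finset.mem_filter, Set.mem_setOf_eq, hmemV, hud]
      constructor
      · rintro ⟨⟨h1, h2⟩, h3⟩
        exact ⟨h3.symm, by omega⟩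
      · rintro ⟨h1, h2⟩
        exact ⟨⟨Geom.adj_mem_right h1, by omega⟩, h1.symm⟩
    have hBe : (GeomB S m u).ncard = 0 := by
      rw [L_B3 S hS hx hm hud]; simp
    have hAt : (GeomA S m u).ncard = t + 1 := by
      have := hAB u hup; omega
    rw [← Set.ncard_coe_finset, hb, L_down S hm u, hAt]
  -- double counting
  have hsum12 : ∑ y ∈ G2, (G1.filter (fun z => S.graph.Adj z y)).card
      = (t + 1) * s * (t * s) := by
    calc ∑ y ∈ G2, (G1.filter (fun z => S.graph.Adj z y)).card
        = ∑ y ∈ G2, ∑ z ∈ G1, if S.graph.Adj z y then 1 else 0 := by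
          simp_rw [Finset.card_filter]
      _ = ∑ z ∈ G1, ∑ y ∈ G2, if S.graph.Adj z y then 1 else 0 := Finset.sum_comm
      _ = ∑ z ∈ G1, (G2.filter (fun y => S.graph.Adj z y)).card := by
          simp_rw [Finset.card_filter]
      _ = ∑ z ∈ G1, t * s := Finset.sum_congr rfl hc2
      _ = G1.card * (t * s) := by rw [Finset.sum_const, smul_eq_mul]
      _ = (t + 1) * s * (t * s) := by rw [hG1card]
  have hsum23 : ∑ y ∈ G2, (G3.filter (fun w => S.graph.Adj y w)).card
      = G3.card * (t + 1) := by
    calc ∑ y ∈ G2, (G3.filter (fun w => S.graph.Adj y w)).card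
        = ∑ y ∈ G2, ∑ u ∈ G3, if S.graph.Adj y u then 1 else 0 := by
          simp_rw [Finset.card_filter]
      _ = ∑ u ∈ G3, ∑ y ∈ G2, if S.graph.Adj y u then 1 else 0 := Finset.sum_comm
      _ = ∑ u ∈ G3, (G2.filter (fun w => S.graph.Adj w u)).card := by
          simp_rw [Finset.card_filter]
      _ = ∑ u ∈ G3, (t + 1) := Finset.sum_congr rfl hc4
      _ = G3.card * (t + 1) := by rw [Finset.sum_const, smul_eq_mul]
  have hmain : s * ((t + 1) * s * (t * s)) + G3.card * (t + 1) = G2.card * (s * (t + 1)) := by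
    calc s * ((t + 1) * s * (t * s)) + G3.card * (t + 1)
        = s * (∑ y ∈ G2, (G1.filter (fun z => S.graph.Adj z y)).card)
          + ∑ y ∈ G2, (G3.filter (fun w => S.graph.Adj y w)).card := by
          rw [hsum12, hsum23]
      _ = ∑ y ∈ G2, (s * (G1.filter (fun z => S.graph.Adj z y)).card
          + (G3.filter (fun w => S.graph.Adj y w)).card) := by
          rw [Finset.sum_add_distrib, Finset.mul_sum]
      _ = ∑ y ∈ G2, s * (t + 1) := by
          refine Finset.sum_congr rfl (fun y hy => ?_)
          obtain ⟨hyV, hyd⟩ := Finset.mem_filter.mp hy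
          have hyp : y ∈ S.pts := (hmemV y).mp hyV
          rw [hc3a y hy, hc3b y hy, ← hAB y hyp]
          ring
      _ = G2.card * (s * (t + 1)) := by rw [Finset.sum_const, smul_eq_mul]
  have hcancel : G3.card + s ^ 3 * t = s * G2.card := by
    have h1 : (G3.card + s ^ 3 * t) * (t + 1) = (s * G2.card) * (t + 1) := by
      have h2 : s * ((t + 1) * s * (t * s)) = (s ^ 3 * t) * (t + 1) := by ring
      have h3 : G2.card * (s * (t + 1)) = (s * G2.card) * (t + 1) := by ring
      rw [h2, h3] at hmain
      rw [add_mul]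
      linarith [hmain]
    exact Nat.eq_of_mul_eq_mul_right (by omega) h1
  -- the partition of the point set by distance
  have hpart : V.card = 1 + G1.card + G2.card + G3.card := by
    have hfib : V.card = ∑ i ∈ Finset.range 4, (V.filter (fun z => S.dist x z = i)).card :=
      Finset.card_eq_sum_card_fiberwise (fun z hz => Finset.mem_range.mpr (by
        have := hS.2.1 x hx z ((hmemV z).mp hz); omega))
    rw [Finset.sum_range_succ, Finset.sum_range_succ, Finset.sum_range_succ,
      Finset.sum_range_succ, Finset.sum_range_zero] at hfib
    have h0 : (V.filter (fun z => S.dist x z = 0)) = {x} := by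
      ext z
      simp only [Finset.mem_filter, Finset.mem_singleton]
      constructor
      · rintro ⟨hzV, hz0⟩
        exact ((hS.1 x hx z ((hmemV z).mp hzV)).dist_eq_zero_iff.mp hz0).symm
      · rintro rfl
        exact ⟨(hmemV _).mpr hx, Geom.dist_self'' S _⟩
    rw [h0, ← hG1, ← hG2, ← hG3, Finset.card_singleton] at hfib
    omega
  have hncard : S.pts.ncard = V.card := Set.ncard_eq_toFinset_card _ hfin
  have hn2 : {y | y ∈ S.pts ∧ S.dist x y = 2}.ncard = G2.card := by
    rw [← Set.ncard_coe_finset G2]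
    congr 1
    ext y
    simp only [hG2, Finset.mem_coe, Finset.mem_filter, Set.mem_setOf_eq, hmemV]
  -- a bridge for the common-neighbour sets
  have hsetc : ∀ y : P, {z | S.graph.Adj x z ∧ S.graph.Adj z y}
      = ((G1.filter (fun z => S.graph.Adj z y)) : Set P) := by
    intro y
    ext z
    simp only [Set.mem_setOf_eq, hG1, Finset.mem_coe, Finset.mem_filter, hmemV]
    constructor
    · rintro ⟨h1, h2⟩
      exact ⟨⟨Geom.adj_mem_right h1, SimpleGraph.dist_eq_one_iff_adj.mpr h1⟩, h2⟩
    · rintro ⟨⟨hz, hz1⟩, h2⟩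
      exact ⟨SimpleGraph.dist_eq_one_iff_adj.mp hz1, h2⟩
  refine ⟨?_, ?_, ?_⟩
  · rw [hncard, hn2, hpart, hG1card]
    linarith [hcancel]
  · rw [hn2]
    have hb : G2.card ≤ (t + 1) * s * (t * s) := by
      calc G2.card = ∑ _y ∈ G2, 1 := by rw [Finset.sum_const, smul_eq_mul, mul_one]
        _ ≤ ∑ y ∈ G2, (G1.filter (fun z => S.graph.Adj z y)).card := Finset.sum_le_sum hc1pos
        _ = (t + 1) * s * (t * s) := hsum12
    calc G2.card ≤ (t + 1) * s * (t * s) := hb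
      _ = s ^ 2 * t * (t + 1) := by ring
  · rw [hn2]
    constructor
    · intro heq y hy hd2
      have hyG2 : y ∈ G2 := Finset.mem_filter.mpr ⟨(hmemV y).mpr hy, hd2⟩
      have hall : ∀ y' ∈ G2, (1 : ℕ) = (G1.filter (fun z => S.graph.Adj z y')).card := by
        refine (Finset.sum_eq_sum_iff_of_le hc1pos).mp ?_
        calc ∑ _y ∈ G2, 1 = G2.card := by rw [Finset.sum_const, smul_eq_mul, mul_one]
          _ = s ^ 2 * t * (t + 1) := heq
          _ = (t + 1) * s * (t * s) := by ring
          _ = ∑ y' ∈ G2, (G1.filter (fun z => S.graph.Adj z y')).card := hsum12.symm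
      have h1 : (G1.filter (fun z => S.graph.Adj z y)).card = 1 := (hall y hyG2).symm
      have hone : {z | S.graph.Adj x z ∧ S.graph.Adj z y}.ncard = 1 := by
        rw [hsetc y, Set.ncard_coe_finset, h1]
      obtain ⟨a, ha⟩ := Set.ncard_eq_one.mp hone
      refine ⟨a, ?_, ?_⟩
      · have h2 : a ∈ ({a} : Set P) := rfl
        rw [← ha] at h2
        exact h2
      · intro b hb
        have h2 : b ∈ {z | S.graph.Adj x z ∧ S.graph.Adj z y} := hb
        rw [ha] at h2
        exact h2
    · intro hGH
      have hall : ∀ y ∈ G2, (G1.filter (fun z => S.graph.Adj z y)).card = 1 := by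
        intro y hy
        obtain ⟨hyV, hy2⟩ := Finset.mem_filter.mp hy
        obtain ⟨a, ⟨ha1, ha2⟩, hauniq⟩ := hGH y ((hmemV y).mp hyV) hy2
        rw [← Set.ncard_coe_finset, ← hsetc y, Set.ncard_eq_one]
        refine ⟨a, ?_⟩
        ext b
        simp only [Set.mem_setOf_eq, Set.mem_singleton_iff]
        constructor
        · intro hb
          exact hauniq b hb
        · rintro rfl
          exact ⟨ha1, ha2⟩
      calc G2.card = ∑ _y ∈ G2, 1 := by rw [Finset.sum_const, smul_eq_mul, mul_one]
        _ = ∑ y ∈ G2, (G1.filter (fun z => S.graph.Adj z y)).card :=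
            Finset.sum_congr rfl (fun y hy => (hall y hy).symm)
        _ = (t + 1) * s * (t * s) := hsum12
        _ = s ^ 2 * t * (t + 1) := by ring

end Worker
section Final
variable {P : Type*}

lemma t_pos (S : Geom P) (s t : ℕ) (hS : S.IsNearPolygon 3)
    (hord : S.HasOrder s t) : 1 ≤ t := by
  by_contra h
  have ht0 : t = 0 := by omega
  obtain ⟨x, hx, y, hy, hd3⟩ := hS.2.2.1
  obtain ⟨z, hzy, hz2⟩ := Geom.exists_penultimate (hS.1 x hx y hy)
    (show S.dist x y = 2 + 1 from hd3)
  have hzp : z ∈ S.pts := Geom.adj_mem_left hzy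
  obtain ⟨w, hwz, hw1⟩ := Geom.exists_penultimate (hS.1 x hx z hzp)
    (show S.dist x z = 1 + 1 from hz2)
  obtain ⟨hne1, L1, hL1, hwL1, hzL1⟩ := hwz
  obtain ⟨hne2, L2, hL2, hzL2, hyL2⟩ := hzy
  have hthru : {L | L ∈ S.lines ∧ z ∈ L}.ncard = 1 := by rw [hord.2 z hzp]; omega
  obtain ⟨L0, hL0⟩ := Set.ncard_eq_one.mp hthru
  have e1 : L1 = L0 := by
    have h1 : L1 ∈ {L | L ∈ S.lines ∧ z ∈ L} := ⟨hL1, hzL1⟩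
    rw [hL0] at h1; exact h1
  have e2 : L2 = L0 := by
    have h1 : L2 ∈ {L | L ∈ S.lines ∧ z ∈ L} := ⟨hL2, hzL2⟩
    rw [hL0] at h1; exact h1
  have hL0l : L0 ∈ S.lines := e1 ▸ hL1
  have hwy : w ≠ y := by
    intro he; rw [he] at hw1; omega
  have hadj : S.graph.Adj w y := Geom.adj_of_line_s15 hL0l (e1 ▸ hwL1) (e2 ▸ hyL2) hwy
  have htri := Geom.dist_triangle_adj (hS.1 x hx w (Geom.adj_mem_left hadj)) hadj
  omega

end Final

theorem statement_15 {P : Type*} (S : Geom P) (s t : ℕ)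
    (hS : S.IsNearPolygon 3) (hfin : S.pts.Finite)
    (hord : S.HasOrder s t) :
    S.pts.ncard ≤ (s + 1) * (s ^ 2 * t ^ 2 + s * t + 1) ∧
    (S.pts.ncard = (s + 1) * (s ^ 2 * t ^ 2 + s * t + 1) ↔ S.IsGenHexagon) := by
  obtain ⟨x0, hx0, y0, hy0, hd3⟩ := hS.2.2.1
  obtain ⟨hkey1, hkey2, hkey3⟩ := key_count S s t hS hfin hord hx0
  have htarget : (s + 1) * (s ^ 2 * t ^ 2 + s * t + 1) + s ^ 3 * t
      = 1 + s + s * t + (s + 1) * (s ^ 2 * t * (t + 1)) := by ring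
  refine ⟨?_, ?_, ?_⟩
  · have h := Nat.mul_le_mul (le_refl (s + 1)) hkey2
    linarith [hkey1, htarget, h]
  · intro heq
    refine ⟨hS, ?_, ?_⟩
    · have ht1 : 1 ≤ t := t_pos S s t hS hord
      intro x hx
      have h2 : 1 < {L | L ∈ S.lines ∧ x ∈ L}.ncard := by rw [hord.2 x hx]; omega
      obtain ⟨L1, hL1, L2, hL2, hne⟩ := (Set.one_lt_ncard (linesThru_finite S hfin x)).mp h2
      exact ⟨L1, hL1.1, L2, hL2.1, hne, hL1.2, hL2.2⟩
    · intro x hx y hy hd2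
      obtain ⟨k1, k2, k3⟩ := key_count S s t hS hfin hord hx
      have e1 : (s + 1) * {y | y ∈ S.pts ∧ S.dist x y = 2}.ncard
          = (s + 1) * (s ^ 2 * t * (t + 1)) := by
        linarith [k1, heq, htarget]
      have hn2eq : {y | y ∈ S.pts ∧ S.dist x y = 2}.ncard = s ^ 2 * t * (t + 1) :=
        Nat.eq_of_mul_eq_mul_left (by omega) e1
      exact (k3.mp hn2eq) y hy hd2
  · intro hGH
    have hn2eq := hkey3.mpr (hGH.2.2 x0 hx0)
    rw [hn2eq] at hkey1
    linarith [hkey1, htarget]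
end

section
/- Let N be a near hexagon in which every line is incident with exactly three points, containing an isometrically embedded full subgeometry H that is a generalized hexagon of order 2. Then every point of N lies at distance at most 2 from the point set of H; moreover, for every point x of N at distance exactly 2 from the point set of H, the set of points of H at distance 2 from x is an ovoid of H. -/
variable {P : Type*}

theorem statement_17 {P : Type*} (N H : Geom P)
    (hN : N.IsNearPolygon 3)
    (h3 : ∀ L ∈ N.lines, L.ncard = 3)
    (hsub : H.IsSubgeom N) (hiso : H.IsIsometric N)
    (hH : H.IsGenHexagon) (hord : H.HasOrder 2 2) :
    (∀ x ∈ N.pts, N.setDist x H.pts ≤ 2) ∧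
    (∀ x ∈ N.pts, N.setDist x H.pts = 2 →
      H.IsOvoid {y | y ∈ H.pts ∧ N.dist x y = 2}) := by
  obtain ⟨hconn, hdiam, hex, hnear⟩ := hN
  constructor
  · intro x hx
    by_contra h
    push_neg at h
    obtain ⟨p, hp, -⟩ := hH.1.2.2.1
    obtain ⟨L, hL, -⟩ := hH.2.1 p hp
    have hLN : L ∈ N.lines := hsub.2 hL
    have hall : ∀ z ∈ L, N.dist x z = 3 := by
      intro z hz
      have hzH : z ∈ H.pts := H.lines_pts L hL hz
      have h1 : N.dist x z ≤ 3 := hdiam x hx z (hsub.1 hzH)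
      have h2 : N.setDist x H.pts ≤ N.dist x z :=
        Nat.sInf_le ⟨z, hzH, rfl⟩
      omega
    obtain ⟨u, hu, v, hv, huv⟩ := N.two_pts L hLN
    obtain ⟨w, -, hw⟩ := hnear x hx L hLN
    have h1 := hw u ⟨hu, fun z hz => by rw [hall u hu, hall z hz]⟩
    have h2 := hw v ⟨hv, fun z hz => by rw [hall v hv, hall z hz]⟩
    exact huv (h1.trans h2.symm)
  · intro x hx hd
    refine ⟨fun y hy => hy.1, ?_⟩
    intro L hL
    have hLN : L ∈ N.lines := hsub.2 hL
    obtain ⟨y, ⟨hyL, hymin⟩, hyuniq⟩ := hnear x hx L hLN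
    have hge : ∀ z ∈ L, 2 ≤ N.dist x z := by
      intro z hz
      have hzH : z ∈ H.pts := H.lines_pts L hL hz
      have h2 : N.setDist x H.pts ≤ N.dist x z :=
        Nat.sInf_le ⟨z, hzH, rfl⟩
      omega
    have hy2 : N.dist x y = 2 := by
      have hle : N.dist x y ≤ 3 :=
        hdiam x hx y (hsub.1 (H.lines_pts L hL hyL))
      have hgey := hge y hyL
      rcases Nat.lt_or_ge (N.dist x y) 3 with hc | hc
      · omega
      · exfalso
        have hall : ∀ z ∈ L, N.dist x z = 3 := by
          intro z hz
          have h1 : N.dist x z ≤ 3 := hdiam x hx z (hsub.1 (H.lines_pts L hL hz))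
          have h2 := hymin z hz
          omega
        obtain ⟨u, hu, v, hv, huv⟩ := N.two_pts L hLN
        have h1 := hyuniq u ⟨hu, fun z hz => by rw [hall u hu, hall z hz]⟩
        have h2 := hyuniq v ⟨hv, fun z hz => by rw [hall v hv, hall z hz]⟩
        exact huv (h1.trans h2.symm)
    refine ⟨y, ⟨hyL, H.lines_pts L hL hyL, hy2⟩, ?_⟩
    rintro z ⟨hzL, -, hz2⟩
    exact hyuniq z ⟨hzL, fun w hw => by rw [hz2]; exact hge w hw⟩
end
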